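/- arXiv:1709.06037 — 8 statements merged into one kernel-verified Lean document; each statement's English description precedes it below -/
import Mathlib

section
/- Let K ⊂ ℝ^d be a nonempty compact convex set, let E = Ex(K) denote its set of extreme points, and let γ : ℝ^d → ℝ be a convex function of the form γ(h) = ψ(‖h‖²) for some ψ : [0,∞) → ℝ. Assume that the symmetry group of E acts transitively on E, i.e. for all u, w ∈ E there is a linear isometry M of ℝ^d with M(E) = E and M u = w. Let λ be a Borel probability measure on ℝ^d with λ(E) = 1 that is invariant under every linear isometry M of ℝ^d satisfying M(E) = E (i.e. the pushforward of λ under M equals λ). Then for every x ∈ K one has ∫ γ(x − y) λ(dy) ≤ ∫∫ γ(u − v) λ(du) λ(dv). -/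
open MeasureTheory

theorem stmt_0 (d : ℕ) (K : Set (EuclideanSpace ℝ (Fin d)))
    (hKcpt : IsCompact K) (hKconv : Convex ℝ K) (hKne : K.Nonempty)
    (ψ : ℝ → ℝ) (γ : EuclideanSpace ℝ (Fin d) → ℝ)
    (hγψ : ∀ h, γ h = ψ (‖h‖ ^ 2))
    (hγconv : ConvexOn ℝ Set.univ γ)
    (E : Set (EuclideanSpace ℝ (Fin d)))
    (hE : E = Set.extremePoints ℝ K)
    (htrans : ∀ u ∈ E, ∀ w ∈ E,
      ∃ M : EuclideanSpace ℝ (Fin d) ≃ₗᵢ[ℝ] EuclideanSpace ℝ (Fin d),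
        ⇑M '' E = E ∧ M u = w)
    (μ : Measure (EuclideanSpace ℝ (Fin d))) [IsProbabilityMeasure μ]
    (hμE : μ E = 1)
    (hμinv : ∀ M : EuclideanSpace ℝ (Fin d) ≃ₗᵢ[ℝ] EuclideanSpace ℝ (Fin d),
      ⇑M '' E = E → μ.map M = μ) :
    ∀ x ∈ K, ∫ y, γ (x - y) ∂μ ≤ ∫ u, ∫ v, γ (u - v) ∂μ ∂μ := by
  -- γ is continuous (convex on all of a finite-dimensional space)
  have hγcont : Continuous γ := by
    have := hγconv.continuousOn isOpen_univ
    rwa [continuousOn_univ] at this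
  -- μ is (a.e.) supported on K
  have hEK : E ⊆ K := by rw [hE]; exact extremePoints_subset
  have hμK : μ K = 1 :=
    le_antisymm prob_le_one (hμE ▸ measure_mono hEK)
  have hKm : MeasurableSet K := hKcpt.isClosed.measurableSet
  have haeK : ∀ᵐ y ∂μ, y ∈ K := by
    rw [ae_iff]
    have : {y | ¬ y ∈ K} = Kᶜ := rfl
    rw [this, measure_compl hKm (measure_ne_top μ K), hμK, measure_univ, tsub_self]
  have hrestrict : μ.restrict K = μ := Measure.restrict_eq_self_of_ae_mem haeK
  -- integrability of the translates of γ
  have hint : ∀ x : EuclideanSpace ℝ (Fin d),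
      Integrable (fun y => γ (x - y)) μ := by
    intro x
    rw [← hrestrict]
    exact ((hγcont.comp (continuous_const.sub continuous_id)).continuousOn).integrableOn_compact
      hKcpt
  set f : EuclideanSpace ℝ (Fin d) → ℝ := fun x => ∫ y, γ (x - y) ∂μ with hfdef
  -- f is convex
  have hfconv : ConvexOn ℝ Set.univ f := by
    refine ⟨convex_univ, ?_⟩
    intro x _ z _ a b ha hb hab
    have key : ∀ y, γ (a • x + b • z - y) ≤ a * γ (x - y) + b * γ (z - y) := by
      intro y
      have h1 : a • x + b • z - y = a • (x - y) + b • (z - y) := by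
        rw [smul_sub, smul_sub,
          show a • x - a • y + (b • z - b • y) = a • x + b • z - (a • y + b • y) by abel,
          ← add_smul, hab, one_smul]
      rw [h1]
      exact hγconv.2 (Set.mem_univ _) (Set.mem_univ _) ha hb hab
    calc f (a • x + b • z) = ∫ y, γ (a • x + b • z - y) ∂μ := rfl
      _ ≤ ∫ y, (a * γ (x - y) + b * γ (z - y)) ∂μ :=
          integral_mono (hint _) (((hint x).const_mul a).add ((hint z).const_mul b)) key
      _ = a * f x + b * f z := by
          rw [integral_add ((hint x).const_mul a) ((hint z).const_mul b),
            integral_const_mul, integral_const_mul]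
  have hfcont : Continuous f := by
    have := hfconv.continuousOn isOpen_univ
    rwa [continuousOn_univ] at this
  -- f is constant on E
  obtain ⟨u₀, hu₀⟩ : (Set.extremePoints ℝ K).Nonempty :=
    hKcpt.extremePoints_nonempty hKne
  have hu₀E : u₀ ∈ E := hE ▸ hu₀
  have hconst : ∀ w ∈ E, f w = f u₀ := by
    intro w hw
    obtain ⟨M, hME, hMu⟩ := htrans u₀ hu₀E w hw
    have hmap := hμinv M hME
    calc f w = ∫ y, γ (w - y) ∂μ := rfl
      _ = ∫ y, γ (w - y) ∂(μ.map M) := by rw [hmap]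
      _ = ∫ z, γ (w - M z) ∂μ := by
          exact integral_map M.continuous.aemeasurable
            ((hγcont.comp (continuous_const.sub continuous_id)).aestronglyMeasurable)
      _ = ∫ z, γ (u₀ - z) ∂μ := by
          have hpt : ∀ z, γ (w - M z) = γ (u₀ - z) := by
            intro z
            rw [← hMu, ← M.map_sub, hγψ, hγψ, M.norm_map]
          simp only [hpt]
      _ = f u₀ := rfl
  -- f is a.e. equal to f u₀
  have hS : ∀ᵐ u ∂μ, f u = f u₀ := by
    have hmeas : MeasurableSet {u | f u = f u₀} :=
      hfcont.measurable (measurableSet_singleton (f u₀))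
    have hsub : E ⊆ {u | f u = f u₀} := fun u hu => hconst u hu
    have h1 : μ {u | f u = f u₀} = 1 :=
      le_antisymm prob_le_one (hμE ▸ measure_mono hsub)
    rw [ae_iff]
    have : {u | ¬ f u = f u₀} = {u | f u = f u₀}ᶜ := rfl
    rw [this, measure_compl hmeas (measure_ne_top μ _), h1, measure_univ, tsub_self]
  -- The right-hand side equals f u₀
  have hRHS : (∫ u, ∫ v, γ (u - v) ∂μ ∂μ) = f u₀ := by
    calc (∫ u, f u ∂μ) = ∫ _u, f u₀ ∂μ := integral_congr_ae hS
      _ = f u₀ := by simp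
  -- conclude via the maximum principle for convex functions
  intro x hx
  have hxhull : x ∈ closure (convexHull ℝ E) := by
    rw [hE, closure_convexHull_extremePoints hKcpt hKconv]
    exact hx
  have hle : convexHull ℝ E ⊆ {z | f z ≤ f u₀} := by
    intro z hz
    obtain ⟨y, hyE, hfy⟩ := hfconv.exists_ge_of_mem_convexHull (Set.subset_univ E) hz
    exact hfy.trans (hconst y hyE).le
  have hclosed : IsClosed {z | f z ≤ f u₀} := isClosed_le hfcont continuous_const
  have hxle : x ∈ {z | f z ≤ f u₀} := closure_minimal hle hclosed hxhull
  rw [hRHS]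
  exact hxle
end

section
/- Let ψ : [0,∞) → ℝ be bounded from below. Then ψ is negative definite on the additive semigroup ([0,∞),+) if and only if ψ is n-alternating for every n ≥ 1. -/
open Finset

noncomputable section
namespace Stmt2Aux

abbrev A : Type := AddMonoidAlgebra ℝ ℝ

instance : CoeFun A (fun _ => ℝ → ℝ) := ⟨fun a => a.coeff⟩

def dl (t : ℝ) : A := AddMonoidAlgebra.single t 1

/-- pairing: apply an element of the shift algebra to ψ at base point x -/
def P (ψ : ℝ → ℝ) (x : ℝ) (a : A) : ℝ := a.coeff.sum fun y c => c * ψ (x + y)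

lemma P_zero (ψ : ℝ → ℝ) (x : ℝ) : P ψ x 0 = 0 := by
  simp [P]

lemma P_add (ψ : ℝ → ℝ) (x : ℝ) (a b : A) : P ψ x (a + b) = P ψ x a + P ψ x b := by
  unfold P
  rw [AddMonoidAlgebra.coeff_add]
  apply Finsupp.sum_add_index'
  · intro y; simp
  · intro y c₁ c₂; ring

lemma P_single (ψ : ℝ → ℝ) (x y c : ℝ) :
    P ψ x (AddMonoidAlgebra.single y c) = c * ψ (x + y) := by
  unfold P
  rw [AddMonoidAlgebra.coeff_single, Finsupp.sum_single_index]
  simp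

lemma P_neg (ψ : ℝ → ℝ) (x : ℝ) (a : A) : P ψ x (-a) = - P ψ x a := by
  have h := P_add ψ x a (-a)
  simp only [add_neg_cancel, P_zero] at h
  linarith

lemma P_sub (ψ : ℝ → ℝ) (x : ℝ) (a b : A) : P ψ x (a - b) = P ψ x a - P ψ x b := by
  rw [sub_eq_add_neg, P_add, P_neg]; ring

lemma P_one (ψ : ℝ → ℝ) (x : ℝ) : P ψ x 1 = ψ x := by
  have : (1 : A) = AddMonoidAlgebra.single 0 1 := rfl
  rw [this, P_single]; simp

lemma P_sum {ι : Type} (ψ : ℝ → ℝ) (x : ℝ) (F : Finset ι) (f : ι → A) :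
    P ψ x (∑ i ∈ F, f i) = ∑ i ∈ F, P ψ x (f i) := by
  classical
  induction F using Finset.cons_induction with
  | empty => simp [P_zero]
  | cons i F hi ih =>
      rw [Finset.sum_cons, Finset.sum_cons, P_add, ih]

lemma P_mul_single (ψ : ℝ → ℝ) (x : ℝ) (a : A) (y c : ℝ) :
    P ψ x (a * AddMonoidAlgebra.single y c) = c * P ψ (x + y) a := by
  induction a using AddMonoidAlgebra.induction_linear with
  | zero => simp [P_zero]
  | add f g hf hg => rw [add_mul, P_add, hf, hg, P_add]; ring
  | single z d =>
      rw [AddMonoidAlgebra.single_mul_single, P_single, P_single]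
      rw [show x + (z + y) = x + y + z by ring]
      ring

lemma P_mul (ψ : ℝ → ℝ) (x : ℝ) (a b : A) :
    P ψ x (a * b) = b.coeff.sum fun y c => c * P ψ (x + y) a := by
  induction b using AddMonoidAlgebra.induction_linear with
  | zero => simp [P_zero]
  | add f g hf hg =>
      rw [mul_add, P_add, hf, hg]
      rw [AddMonoidAlgebra.coeff_add, Finsupp.sum_add_index']
      · intro y; simp
      · intro y c₁ c₂; ring
  | single z d =>
      rw [P_mul_single, AddMonoidAlgebra.coeff_single, Finsupp.sum_single_index]
      simp

lemma P_mul_dl (ψ : ℝ → ℝ) (x t : ℝ) (a : A) :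
    P ψ x (a * dl t) = P ψ (x + t) a := by
  rw [dl, P_mul_single, one_mul]

lemma P_dl_mul (ψ : ℝ → ℝ) (x t : ℝ) (a : A) :
    P ψ x (dl t * a) = P ψ (x + t) a := by
  rw [mul_comm, P_mul_dl]

lemma P_D_mul (ψ : ℝ → ℝ) (x t : ℝ) (a : A) :
    P ψ x ((1 - dl t) * a) = P ψ x a - P ψ (x + t) a := by
  rw [sub_mul, one_mul, P_sub, P_dl_mul]

/-! ### mass and support -/

def mass (a : A) : ℝ := a.coeff.sum fun _ c => c

lemma mass_single (y c : ℝ) : mass (AddMonoidAlgebra.single y c) = c := by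
  unfold mass
  rw [AddMonoidAlgebra.coeff_single, Finsupp.sum_single_index rfl]

lemma mass_one : mass (1 : A) = 1 := mass_single 0 1

lemma mass_dl (t : ℝ) : mass (dl t) = 1 := mass_single t 1

lemma mass_add (a b : A) : mass (a + b) = mass a + mass b := by
  unfold mass
  rw [AddMonoidAlgebra.coeff_add]
  apply Finsupp.sum_add_index' <;> simp

lemma mass_sub (a b : A) : mass (a - b) = mass a - mass b := by
  have h := mass_add (a - b) b
  simp only [sub_add_cancel] at h
  linarith

lemma mass_mul (a b : A) : mass (a * b) = mass a * mass b := by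
  induction b using AddMonoidAlgebra.induction_linear with
  | zero => simp [mass, mul_zero]
  | add f g hf hg => rw [mul_add, mass_add, mass_add, hf, hg]; ring
  | single z d =>
      induction a using AddMonoidAlgebra.induction_linear with
      | zero => simp [mass, zero_mul]
      | add f g hf hg => rw [add_mul, mass_add, mass_add, hf, hg]; ring
      | single y c =>
          rw [AddMonoidAlgebra.single_mul_single, mass_single, mass_single, mass_single]

def SuppNN (a : A) : Prop := ∀ y : ℝ, y < 0 → a y = 0

lemma suppNN_one : SuppNN (1 : A) := by
  intro y hy
  have : (1 : A) = AddMonoidAlgebra.single 0 1 := rfl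
  rw [this, AddMonoidAlgebra.coeff_single, Finsupp.single_apply, if_neg (by linarith)]

lemma suppNN_sub {a b : A} (ha : SuppNN a) (hb : SuppNN b) : SuppNN (a - b) := by
  intro y hy
  rw [AddMonoidAlgebra.coeff_sub, Finsupp.sub_apply, ha y hy, hb y hy, sub_zero]

lemma suppNN_dl {t : ℝ} (ht : 0 ≤ t) : SuppNN (dl t) := by
  intro y hy
  rw [dl, AddMonoidAlgebra.coeff_single, Finsupp.single_apply, if_neg (by intro h; rw [h] at ht; linarith)]

lemma suppNN_dl_mul {t : ℝ} (ht : 0 ≤ t) {b : A} (hb : SuppNN b) : SuppNN (dl t * b) := by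
  intro y hy
  rw [dl, AddMonoidAlgebra.coeff_single_mul_apply, one_mul]
  exact hb _ (by linarith)

lemma suppNN_D_mul {t : ℝ} (ht : 0 ≤ t) {b : A} (hb : SuppNN b) : SuppNN ((1 - dl t) * b) := by
  rw [sub_mul, one_mul]
  exact suppNN_sub hb (suppNN_dl_mul ht hb)

lemma suppNN_D {t : ℝ} (ht : 0 ≤ t) : SuppNN ((1 : A) - dl t) :=
  suppNN_sub suppNN_one (suppNN_dl ht)

/-! ### products over lists -/

def DP (L : List ℝ) : A := (L.map (fun t => 1 - dl t)).prod

lemma DP_nil : DP [] = 1 := rfl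

lemma DP_cons (t : ℝ) (L : List ℝ) : DP (t :: L) = (1 - dl t) * DP L := by
  unfold DP
  rw [List.map_cons, List.prod_cons]

lemma DP_append (L₁ L₂ : List ℝ) : DP (L₁ ++ L₂) = DP L₁ * DP L₂ := by
  unfold DP
  rw [List.map_append, List.prod_append]

lemma DP_perm {L₁ L₂ : List ℝ} (h : L₁.Perm L₂) : DP L₁ = DP L₂ := by
  unfold DP
  exact (h.map _).prod_eq

lemma DP_replicate (k : ℕ) (t : ℝ) : DP (List.replicate k t) = (1 - dl t) ^ k := by
  unfold DP
  rw [List.map_replicate, List.prod_replicate]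

lemma suppNN_DP {L : List ℝ} (h : ∀ x ∈ L, 0 ≤ x) : SuppNN (DP L) := by
  induction L with
  | nil => exact suppNN_one
  | cons t L ih =>
      rw [DP_cons]
      exact suppNN_D_mul (h t (by simp)) (ih fun x hx => h x (by simp [hx]))

lemma mass_DP_ne_nil {L : List ℝ} (h : L ≠ []) : mass (DP L) = 0 := by
  cases L with
  | nil => exact absurd rfl h
  | cons t L =>
      rw [DP_cons, mass_mul, mass_sub, mass_one, mass_dl]
      ring

lemma prod_dl_neg {n : ℕ} (t : Fin n → ℝ) (B : Finset (Fin n)) :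
    ∏ i ∈ B, (-(dl (t i))) = AddMonoidAlgebra.single (∑ i ∈ B, t i) ((-1 : ℝ) ^ B.card) := by
  classical
  induction B using Finset.cons_induction with
  | empty =>
      simp only [Finset.prod_empty, Finset.sum_empty, Finset.card_empty, pow_zero]
      rfl
  | cons i B hi ih =>
      rw [Finset.prod_cons, ih, Finset.sum_cons, Finset.card_cons]
      rw [show -(dl (t i)) = AddMonoidAlgebra.single (t i) (-1 : ℝ) by
        rw [dl]; rw [AddMonoidAlgebra.single_neg]]
      rw [AddMonoidAlgebra.single_mul_single]
      congr 1
      rw [pow_succ]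
      ring

/-- bridge: the alternating Finset sum equals the pairing with the product ∏(1 - E_t). -/
lemma bridge (ψ : ℝ → ℝ) (x : ℝ) {n : ℕ} (t : Fin n → ℝ) :
    P ψ x (∏ i : Fin n, (1 - dl (t i))) =
      ∑ B : Finset (Fin n), (-1 : ℝ) ^ B.card * ψ (x + ∑ i ∈ B, t i) := by
  classical
  have h1 : ∀ i : Fin n, (1 : A) - dl (t i) = -(dl (t i)) + 1 := by
    intro i; ring
  simp_rw [h1]
  rw [Finset.prod_add]
  rw [Finset.powerset_univ]
  rw [P_sum]
  apply Finset.sum_congr rfl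
  intro B _
  rw [Finset.prod_const_one, mul_one, prod_dl_neg, P_single]

lemma DP_ofFn {n : ℕ} (t : Fin n → ℝ) :
    DP (List.ofFn t) = ∏ i : Fin n, (1 - dl (t i)) := by
  unfold DP
  rw [List.map_ofFn, List.prod_ofFn]
  rfl

lemma DP_eq_prod_get (L : List ℝ) :
    DP L = ∏ i : Fin L.length, (1 - dl (L.get i)) := by
  conv_lhs => rw [← List.ofFn_get L]
  exact DP_ofFn L.get


/-! ### the square inequality from negative definiteness -/

def NegDefHalfLine' (ψ : ℝ → ℝ) : Prop :=
  ∀ (n : ℕ) (s : Fin n → ℝ), (∀ i, 0 ≤ s i) → ∀ a : Fin n → ℝ,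
    ∑ i, a i = 0 → ∑ i, ∑ j, a i * a j * ψ (s i + s j) ≤ 0

lemma P_sq_nonpos {ψ : ℝ → ℝ} (hND : NegDefHalfLine' ψ) {a : A}
    (hsupp : SuppNN a) (hmz : mass a = 0) {s : ℝ} (hs : 0 ≤ s) :
    P ψ s (a * a) ≤ 0 := by
  classical
  set S := a.coeff.support with hS
  have hmemnn : ∀ y ∈ S, (0:ℝ) ≤ y := by
    intro y hy
    by_contra hneg
    exact (Finsupp.mem_support_iff.mp hy) (hsupp y (by linarith))
  have expand : P ψ s (a * a) = ∑ y ∈ S, ∑ z ∈ S, a y * (a z * ψ (s + y + z)) := by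
    rw [P_mul]
    unfold Finsupp.sum
    apply Finset.sum_congr rfl
    intro y _
    show a y * P ψ (s + y) a = _
    rw [show P ψ (s + y) a = ∑ z ∈ S, a z * ψ (s + y + z) from rfl, Finset.mul_sum]
  set k := S.card with hk
  set e := S.equivFin with he
  set σ : Fin k → ℝ := fun i => s / 2 + ((e.symm i : ↥S) : ℝ) with hσdef
  set α : Fin k → ℝ := fun i => a ((e.symm i : ↥S) : ℝ) with hαdef
  have hσ : ∀ i, 0 ≤ σ i := by
    intro i
    have := hmemnn _ (e.symm i).2
    simp only [hσdef]
    linarith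
  have hα0 : ∑ i, α i = 0 := by
    have h1 : ∑ i : Fin k, α i = ∑ p : ↥S, a ↑p :=
      Equiv.sum_comp e.symm (fun p : ↥S => a ↑p)
    rw [h1, Finset.sum_coe_sort S (fun y => a y)]
    exact hmz
  have hQ := hND k σ hσ α hα0
  have step1 : ∑ i : Fin k, ∑ j : Fin k, α i * α j * ψ (σ i + σ j)
      = ∑ p : ↥S, ∑ q : ↥S, a ↑p * (a ↑q * ψ (s + ↑p + ↑q)) := by
    rw [← Equiv.sum_comp e.symm (fun p : ↥S => ∑ q : ↥S, a ↑p * (a ↑q * ψ (s + ↑p + ↑q)))]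
    apply Finset.sum_congr rfl
    intro i _
    rw [← Equiv.sum_comp e.symm
      (fun q : ↥S => a ↑(e.symm i) * (a ↑q * ψ (s + ↑(e.symm i) + ↑q)))]
    apply Finset.sum_congr rfl
    intro j _
    simp only [hσdef, hαdef]
    rw [show s / 2 + ↑(e.symm i) + (s / 2 + ↑(e.symm j)) = s + ↑(e.symm i) + ↑(e.symm j) by ring]
    ring
  have step2 : ∑ p : ↥S, ∑ q : ↥S, a ↑p * (a ↑q * ψ (s + ↑p + ↑q))
      = ∑ y ∈ S, ∑ z ∈ S, a y * (a z * ψ (s + y + z)) := by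
    rw [← Finset.sum_coe_sort S (fun y => ∑ z ∈ S, a y * (a z * ψ (s + y + z)))]
    apply Finset.sum_congr rfl
    intro p _
    exact Finset.sum_coe_sort S (fun z => a ↑p * (a z * ψ (s + ↑p + z)))
  rw [expand, ← step2, ← step1]
  exact hQ

/-! ### telescoping -/

lemma telescope {f : ℝ → ℝ} {t s : ℝ} (ht : 0 ≤ t) (hs : 0 ≤ s)
    (h1 : ∀ x : ℝ, 0 ≤ x → (f x - f (x + t)) - (f (x + t) - f (x + t + t)) ≤ 0)
    (h2 : ∃ B, ∀ x : ℝ, 0 ≤ x → B ≤ f x) :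
    f s - f (s + t) ≤ 0 := by
  obtain ⟨B, hB⟩ := h2
  by_contra hcon
  push_neg at hcon
  set δ := f s - f (s + t) with hδ
  have hδpos : 0 < δ := hcon
  have base : ∀ K : ℕ, 0 ≤ s + K * t := by
    intro K
    have : (0:ℝ) ≤ (K : ℝ) * t := mul_nonneg (Nat.cast_nonneg K) ht
    linarith
  have mono : ∀ K : ℕ, δ ≤ f (s + K * t) - f (s + K * t + t) := by
    intro K
    induction K with
    | zero => simp [hδ]
    | succ K ih =>
        have hstep := h1 (s + K * t) (base K)
        have harg : s + (K + 1 : ℕ) * t = s + K * t + t := by push_cast; ring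
        rw [harg]
        linarith
  have sum : ∀ K : ℕ, (K : ℝ) * δ ≤ f s - f (s + K * t) := by
    intro K
    induction K with
    | zero => simp
    | succ K ih =>
        have := mono K
        have harg : s + (K + 1 : ℕ) * t = s + K * t + t := by push_cast; ring
        rw [harg]
        push_cast
        linarith
  obtain ⟨K, hK⟩ := exists_nat_gt ((f s - B) / δ)
  have h3 := sum K
  have h4 := hB _ (base K)
  have h5 : (f s - B) < K * δ := by
    rw [div_lt_iff₀ hδpos] at hK
    linarith
  linarith


/-! ### consequences for a bounded-below negative definite function -/

section NegDefSide

variable {ψ : ℝ → ℝ} {m : ℝ}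

/-- equal-step concavity from negative definiteness -/
lemma sqES (hND : NegDefHalfLine' ψ) {t : ℝ} (ht : 0 ≤ t) {x : ℝ} (hx : 0 ≤ x) :
    (ψ x - ψ (x + t)) - (ψ (x + t) - ψ (x + t + t)) ≤ 0 := by
  have h := P_sq_nonpos hND (a := 1 - dl t) (suppNN_D ht)
    (by rw [mass_sub, mass_one, mass_dl]; ring) hx
  have expand : P ψ x ((1 - dl t) * (1 - dl t))
      = (ψ x - ψ (x + t)) - (ψ (x + t) - ψ (x + t + t)) := by
    rw [P_D_mul, P_sub, P_sub, P_one, P_one, dl, P_single, P_single, one_mul, one_mul]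
  linarith [expand ▸ h]

lemma psi_mono (hND : NegDefHalfLine' ψ) (hm : ∀ x : ℝ, 0 ≤ x → m ≤ ψ x)
    {s t : ℝ} (hs : 0 ≤ s) (ht : 0 ≤ t) : ψ s ≤ ψ (s + t) := by
  have := telescope (f := ψ) ht hs (fun x hx => sqES hND ht hx) ⟨m, hm⟩
  linarith

lemma psi_mono' (hND : NegDefHalfLine' ψ) (hm : ∀ x : ℝ, 0 ≤ x → m ≤ ψ x)
    {p q : ℝ} (hp : 0 ≤ p) (hpq : p ≤ q) : ψ p ≤ ψ q := by
  have := psi_mono hND hm hp (by linarith : (0:ℝ) ≤ q - p)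
  rw [show p + (q - p) = q by ring] at this
  exact this

/-- bounded increments -/
lemma psi_incr (hND : NegDefHalfLine' ψ) (hm : ∀ x : ℝ, 0 ≤ x → m ≤ ψ x)
    {v x : ℝ} (hv : 0 ≤ v) (hx : 0 ≤ x) : ψ (x + v) - ψ x ≤ ψ (v + v) - m := by
  rcases eq_or_lt_of_le hv with hv0 | hvpos
  · -- v = 0
    have h1 := hm x hx
    have h2 : ψ (x + v) = ψ x := by rw [← hv0]; norm_num
    have h3 : (0:ℝ) ≤ v + v := by linarith
    have h4 := psi_mono' hND hm h3 (le_refl (v + v))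
    have h5 := hm (v + v) h3
    linarith
  · set K := Nat.floor (x / v) with hK
    set r := x - K * v with hr
    have hr0 : 0 ≤ r := by
      have h1 : (K : ℝ) ≤ x / v := Nat.floor_le (by positivity)
      have h2 : (K : ℝ) * v ≤ x := by
        rw [← div_mul_cancel₀ x (ne_of_gt hvpos)]
        exact mul_le_mul_of_nonneg_right h1 (le_of_lt hvpos)
      linarith
    have hrv : r ≤ v := by
      have h1 : x / v < (K : ℝ) + 1 := Nat.lt_floor_add_one (x / v)
      have h2 : x < ((K : ℝ) + 1) * v := by
        rw [← div_mul_cancel₀ x (ne_of_gt hvpos)]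
        exact mul_lt_mul_of_pos_right h1 hvpos
      have := le_of_lt h2
      nlinarith
    have claim : ∀ j : ℕ, ψ (r + j * v + v) - ψ (r + j * v) ≤ ψ (r + v) - ψ r := by
      intro j
      induction j with
      | zero => norm_num
      | succ j ih =>
          have hbase : (0:ℝ) ≤ r + j * v := by positivity
          have hstep := sqES hND (le_of_lt hvpos) hbase
          have harg : r + ((j:ℕ) + 1 : ℕ) * v = r + j * v + v := by push_cast; ring
          rw [harg]
          linarith
    have hKx : r + K * v = x := by rw [hr]; ring
    have h6 := claim K
    rw [hKx] at h6
    have h7 : ψ (r + v) ≤ ψ (v + v) := psi_mono' hND hm (by linarith) (by linarith)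
    have h8 := hm r hr0
    linarith

/-- uniform bound for iterated differences -/
lemma DP_bound (hND : NegDefHalfLine' ψ) (hm : ∀ x : ℝ, 0 ≤ x → m ≤ ψ x) :
    ∀ (L : List ℝ) (v : ℝ), (∀ y ∈ L, 0 ≤ y) → 0 ≤ v → ∀ x : ℝ, 0 ≤ x →
      |P ψ x (DP (L ++ [v]))| ≤ 2 ^ L.length * (ψ (v + v) - m) := by
  intro L
  induction L with
  | nil =>
      intro v _ hv x hx
      have h1 : P ψ x (DP [v]) = ψ x - ψ (x + v) := by
        rw [show [v] = v :: ([] : List ℝ) from rfl, DP_cons, DP_nil, mul_one, P_sub,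
          P_one, dl, P_single, one_mul]
      rw [show ([] : List ℝ) ++ [v] = [v] from rfl, h1]
      have h2 := psi_mono hND hm hx hv
      rw [abs_of_nonpos (by linarith)]
      have h3 := psi_incr hND hm hv hx
      simp only [List.length_nil, pow_zero, one_mul]
      linarith
  | cons t L ih =>
      intro v hmem hv x hx
      have ht : 0 ≤ t := hmem t (by simp)
      have hmem' : ∀ y ∈ L, 0 ≤ y := fun y hy => hmem y (by simp [hy])
      have h1 : P ψ x (DP ((t :: L) ++ [v]))
          = P ψ x (DP (L ++ [v])) - P ψ (x + t) (DP (L ++ [v])) := by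
        rw [show (t :: L) ++ [v] = t :: (L ++ [v]) from rfl, DP_cons, P_D_mul]
      rw [h1]
      have h2 := ih v hmem' hv x hx
      have h3 := ih v hmem' hv (x + t) (by linarith)
      have h4 := abs_sub (P ψ x (DP (L ++ [v]))) (P ψ (x + t) (DP (L ++ [v])))
      calc |P ψ x (DP (L ++ [v])) - P ψ (x + t) (DP (L ++ [v]))|
          ≤ |P ψ x (DP (L ++ [v]))| + |P ψ (x + t) (DP (L ++ [v]))| := abs_sub _ _
        _ ≤ 2 ^ L.length * (ψ (v + v) - m) + 2 ^ L.length * (ψ (v + v) - m) := by linarith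
        _ = 2 ^ (t :: L).length * (ψ (v + v) - m) := by
            rw [List.length_cons, pow_succ]
            ring

end NegDefSide


/-! ### halving a list with all even multiplicities -/

lemma half_list : ∀ (n : ℕ) (L : List ℝ), L.length ≤ n →
    (∀ x : ℝ, L.count x % 2 = 0) → ∃ M : List ℝ, L.Perm (M ++ M) ∧ ∀ x ∈ M, x ∈ L := by
  intro n
  induction n with
  | zero =>
      intro L hlen _
      have : L = [] := List.length_eq_zero_iff.mp (Nat.le_zero.mp hlen)
      exact ⟨[], by simp [this], by simp⟩
  | succ n ih =>
      intro L hlen hev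
      cases L with
      | nil => exact ⟨[], by simp, by simp⟩
      | cons t L' =>
          have hct : L'.count t % 2 = 1 := by
            have h1 := hev t
            rw [List.count_cons_self] at h1
            omega
          have htL' : t ∈ L' := by
            rw [← List.count_pos_iff]
            omega
          set L'' := L'.erase t with hL''
          have hperm1 : L'.Perm (t :: L'') := List.perm_cons_erase htL'
          have hev'' : ∀ x : ℝ, L''.count x % 2 = 0 := by
            intro x
            rcases eq_or_ne x t with rfl | hne
            · rw [hL'', List.count_erase_self]
              omega
            · rw [hL'', List.count_erase_of_ne hne]
              have := hev x
              rw [List.count_cons_of_ne hne.symm] at this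
              exact this
          have hlen'' : L''.length ≤ n := by
            have h1 : L''.length = L'.length - 1 := by
              rw [hL'']; exact List.length_erase_of_mem htL'
            have h2 : L'.length ≥ 1 := List.length_pos_iff.mpr (List.ne_nil_of_mem htL')
            simp only [List.length_cons] at hlen
            omega
          obtain ⟨M'', hpM, hmM⟩ := ih L'' hlen'' hev''
          refine ⟨t :: M'', ?_, ?_⟩
          · have h1 : (t :: L').Perm (t :: t :: L'') := hperm1.cons t
            have h2 : (t :: t :: L'').Perm (t :: t :: (M'' ++ M'')) := (hpM.cons t).cons t
            have h3 : (t :: (M'' ++ t :: M'')).Perm (t :: t :: (M'' ++ M'')) :=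
              (List.perm_middle (l₁ := M'') (l₂ := M'') (a := t)).cons t
            have h4 : (t :: M'') ++ (t :: M'') = t :: (M'' ++ t :: M'') := rfl
            rw [h4]
            exact (h1.trans h2).trans h3.symm
          · intro x hx
            rcases List.mem_cons.mp hx with rfl | hx'
            · exact List.mem_cons_self
            · exact List.mem_cons_of_mem t (List.mem_of_mem_erase (hmM x hx'))


/-! ### the main induction for the forward direction -/

def oddCard (L : List ℝ) : ℕ := (L.toFinset.filter (fun x => L.count x % 2 = 1)).card

lemma main_alt {ψ : ℝ → ℝ} {m : ℝ} (hND : NegDefHalfLine' ψ)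
    (hm : ∀ x : ℝ, 0 ≤ x → m ≤ ψ x) :
    ∀ (k : ℕ) (L : List ℝ), oddCard L = k → L ≠ [] → (∀ y ∈ L, 0 ≤ y) →
      ∀ s : ℝ, 0 ≤ s → P ψ s (DP L) ≤ 0 := by
  intro k
  induction k with
  | zero =>
      intro L hoc hne hnn s hs
      have hev : ∀ x : ℝ, L.count x % 2 = 0 := by
        intro x
        by_cases hx : x ∈ L
        · have hfe : L.toFinset.filter (fun x => L.count x % 2 = 1) = ∅ :=
            Finset.card_eq_zero.mp hoc
          have : ¬ (L.count x % 2 = 1) := by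
            intro hodd
            have : x ∈ L.toFinset.filter (fun x => L.count x % 2 = 1) :=
              Finset.mem_filter.mpr ⟨List.mem_toFinset.mpr hx, hodd⟩
            rw [hfe] at this
            exact absurd this (Finset.notMem_empty x)
          omega
        · rw [List.count_eq_zero.mpr hx]
      obtain ⟨M, hperm, hmem⟩ := half_list L.length L le_rfl hev
      have hMne : M ≠ [] := by
        intro h
        rw [h] at hperm
        exact hne (hperm.eq_nil)
      rw [DP_perm hperm, DP_append]
      exact P_sq_nonpos hND (suppNN_DP (fun x hx => hnn x (hmem x hx)))
        (mass_DP_ne_nil hMne) hs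
  | succ k ih =>
      intro L hoc hne hnn s hs
      have hoc' : (L.toFinset.filter (fun x => L.count x % 2 = 1)).card = k + 1 := hoc
      have hpos : 0 < (L.toFinset.filter (fun x => L.count x % 2 = 1)).card := by
        omega
      obtain ⟨t, htf⟩ := Finset.card_pos.mp hpos
      have htF : t ∈ L.toFinset := (Finset.mem_filter.mp htf).1
      have hodd : L.count t % 2 = 1 := (Finset.mem_filter.mp htf).2
      have htL : t ∈ L := List.mem_toFinset.mp htF
      have ht0 : 0 ≤ t := hnn t htL
      set M' := L.erase t with hM'
      have hpermL : L.Perm (t :: M') := List.perm_cons_erase htL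
      have hcMt : M'.count t = L.count t - 1 := by rw [hM']; exact List.count_erase_self
      have hcM' : ∀ x : ℝ, x ≠ t → M'.count x = L.count x := by
        intro x hx
        rw [hM']; exact List.count_erase_of_ne hx
      have hctpos : 1 ≤ L.count t := by omega
      have hmemM' : ∀ x ∈ M', x ∈ L := fun x hx => List.mem_of_mem_erase hx
      have hnnM' : ∀ y ∈ M', 0 ≤ y := fun y hy => hnn y (hmemM' y hy)
      set L₂ := t :: t :: M' with hL₂
      have hnnL₂ : ∀ y ∈ L₂, 0 ≤ y := by
        intro y hy
        rcases List.mem_cons.mp hy with rfl | hy'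
        · exact ht0
        · rcases List.mem_cons.mp hy' with rfl | hy''
          · exact ht0
          · exact hnnM' y hy''
      have hcL₂ : ∀ x : ℝ, L₂.count x = L.count x + (if x = t then 1 else 0) := by
        intro x
        rcases eq_or_ne x t with rfl | hne'
        · rw [hL₂, List.count_cons_self, List.count_cons_self, hcMt, if_pos rfl]
          omega
        · rw [hL₂, List.count_cons_of_ne hne'.symm, List.count_cons_of_ne hne'.symm, hcM' x hne',
            if_neg hne']
          omega
      have hmemL₂ : ∀ x : ℝ, x ∈ L₂ ↔ x ∈ L := by
        intro x
        constructor
        · intro hx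
          rcases List.mem_cons.mp hx with rfl | hx'
          · exact htL
          · rcases List.mem_cons.mp hx' with rfl | hx''
            · exact htL
            · exact hmemM' x hx''
        · intro hx
          rcases eq_or_ne x t with rfl | hne'
          · exact List.mem_cons_self
          · have : 0 < L.count x := List.count_pos_iff.mpr hx
            have : 0 < M'.count x := by rw [hcM' x hne']; omega
            have : x ∈ M' := List.count_pos_iff.mp this
            exact List.mem_cons_of_mem t (List.mem_cons_of_mem t this)
      have hocL₂ : oddCard L₂ = k := by
        have hfilter : L₂.toFinset.filter (fun x => L₂.count x % 2 = 1)
            = (L.toFinset.filter (fun x => L.count x % 2 = 1)).erase t := by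
          ext x
          rw [Finset.mem_filter, Finset.mem_erase, Finset.mem_filter,
            List.mem_toFinset, List.mem_toFinset, hmemL₂ x, hcL₂ x]
          rcases eq_or_ne x t with rfl | hne'
          · rw [if_pos rfl]
            constructor
            · intro ⟨_, hpar⟩; omega
            · intro ⟨hxt, _⟩; exact absurd rfl hxt
          · rw [if_neg hne']
            constructor
            · intro ⟨hxl, hpar⟩; exact ⟨hne', hxl, by omega⟩
            · intro ⟨_, hxl, hpar⟩; exact ⟨hxl, by omega⟩
        rw [oddCard, hfilter, Finset.card_erase_of_mem htf]
        omega
      set f : ℝ → ℝ := fun x => P ψ x (DP M') with hf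
      have h1 : ∀ x : ℝ, 0 ≤ x → (f x - f (x + t)) - (f (x + t) - f (x + t + t)) ≤ 0 := by
        intro x hx
        have e1 : P ψ x (DP L₂) = (f x - f (x + t)) - (f (x + t) - f (x + t + t)) := by
          rw [hL₂, DP_cons, DP_cons, P_D_mul, P_D_mul, P_D_mul]
        have := ih L₂ hocL₂ (by simp [hL₂]) hnnL₂ x hx
        linarith [e1 ▸ this]
      have h2 : ∃ B : ℝ, ∀ x : ℝ, 0 ≤ x → B ≤ f x := by
        by_cases hM'ne : M' = []
        · refine ⟨m, fun x hx => ?_⟩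
          rw [hf]
          simp only [hM'ne, DP_nil, P_one]
          exact hm x hx
        · set v := M'.getLast hM'ne with hv
          set Ld := M'.dropLast with hLd
          have hsplit : Ld ++ [v] = M' := List.dropLast_append_getLast hM'ne
          have hv0 : 0 ≤ v := hnnM' v (List.getLast_mem hM'ne)
          have hnnLd : ∀ y ∈ Ld, 0 ≤ y := fun y hy =>
            hnnM' y (List.dropLast_subset M' hy)
          refine ⟨-(2 ^ Ld.length * (ψ (v + v) - m)), fun x hx => ?_⟩
          have := DP_bound hND hm Ld v hnnLd hv0 x hx
          rw [hsplit] at this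
          have := neg_abs_le (P ψ x (DP M'))
          rw [hf]
          have habs := DP_bound hND hm Ld v hnnLd hv0 x hx
          rw [hsplit] at habs
          have := neg_le_of_abs_le habs
          linarith [neg_le_of_abs_le habs]
      have htel := telescope ht0 hs h1 h2
      have efin : P ψ s (DP L) = f s - f (s + t) := by
        rw [DP_perm hpermL, DP_cons, P_D_mul]
      linarith [efin ▸ htel]


/-! ### binomial identities in a commutative ring -/

section Binomial

variable {R : Type} [CommRing R]

lemma bin1 (x : R) (N : ℕ) :
    ∑ ρ ∈ range (N + 1), x ^ ρ * (1 - x) ^ (N - ρ) * (N.choose ρ : R) = 1 := by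
  have h := add_pow x (1 - x) N
  rw [show x + (1 - x) = 1 by ring, one_pow] at h
  exact h.symm

lemma bin2 (x : R) (M : ℕ) :
    ∑ ρ ∈ range (M + 1 + 1), (ρ : R) * (x ^ ρ * (1 - x) ^ (M + 1 - ρ) * ((M + 1).choose ρ : R))
      = ((M : R) + 1) * x := by
  rw [Finset.sum_range_succ']
  have h0 : ((0 : ℕ) : R) * (x ^ 0 * (1 - x) ^ (M + 1 - 0) * ((M + 1).choose 0 : R)) = 0 := by
    simp
  rw [h0, add_zero]
  have hcongr : ∀ i ∈ range (M + 1),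
      ((i + 1 : ℕ) : R) * (x ^ (i + 1) * (1 - x) ^ (M + 1 - (i + 1)) * ((M + 1).choose (i + 1) : R))
      = ((M : R) + 1) * x * (x ^ i * (1 - x) ^ (M - i) * (M.choose i : R)) := by
    intro i _
    have hsub : M + 1 - (i + 1) = M - i := by omega
    have hnat : (M + 1) * M.choose i = (M + 1).choose (i + 1) * (i + 1) :=
      Nat.add_one_mul_choose_eq M i
    have hR : ((M : R) + 1) * (M.choose i : R) = ((M + 1).choose (i + 1) : R) * ((i : R) + 1) := by
      exact_mod_cast congrArg (Nat.cast : ℕ → R) hnat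
    rw [hsub]
    push_cast
    linear_combination (-(x ^ (i + 1) * (1 - x) ^ (M - i))) * hR
  rw [Finset.sum_congr rfl hcongr, ← Finset.mul_sum, bin1]
  ring

lemma bin3 (x : R) (M : ℕ) :
    ∑ ρ ∈ range (M + 2 + 1),
        (ρ : R) * ((ρ : R) - 1) * (x ^ ρ * (1 - x) ^ (M + 2 - ρ) * ((M + 2).choose ρ : R))
      = ((M : R) + 2) * ((M : R) + 1) * (x * x) := by
  rw [Finset.sum_range_succ', Finset.sum_range_succ']
  have h0 : ((0 : ℕ) : R) * (((0:ℕ) : R) - 1)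
      * (x ^ 0 * (1 - x) ^ (M + 2 - 0) * ((M + 2).choose 0 : R)) = 0 := by simp
  have h1 : ((0 + 1 : ℕ) : R) * (((0+1:ℕ) : R) - 1)
      * (x ^ (0+1) * (1 - x) ^ (M + 2 - (0+1)) * ((M + 2).choose (0+1) : R)) = 0 := by
    push_cast
    ring
  rw [h0, h1, add_zero, add_zero]
  have hcongr : ∀ i ∈ range (M + 1),
      ((i + 1 + 1 : ℕ) : R) * (((i + 1 + 1 : ℕ) : R) - 1)
          * (x ^ (i + 1 + 1) * (1 - x) ^ (M + 2 - (i + 1 + 1)) * ((M + 2).choose (i + 1 + 1) : R))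
      = ((M : R) + 2) * ((M : R) + 1) * (x * x) * (x ^ i * (1 - x) ^ (M - i) * (M.choose i : R)) := by
    intro i _
    have hsub : M + 2 - (i + 1 + 1) = M - i := by omega
    have hn1 : (M + 2) * (M + 1).choose (i + 1) = (M + 2).choose (i + 2) * (i + 2) :=
      Nat.add_one_mul_choose_eq (M + 1) (i + 1)
    have hn2 : (M + 1) * M.choose i = (M + 1).choose (i + 1) * (i + 1) :=
      Nat.add_one_mul_choose_eq M i
    have hR1 : ((M : R) + 2) * ((M + 1).choose (i + 1) : R)
        = ((M + 2).choose (i + 2) : R) * ((i : R) + 2) := by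
      exact_mod_cast congrArg (Nat.cast : ℕ → R) hn1
    have hR2 : ((M : R) + 1) * (M.choose i : R)
        = ((M + 1).choose (i + 1) : R) * ((i : R) + 1) := by
      exact_mod_cast congrArg (Nat.cast : ℕ → R) hn2
    have hexp : (M + 2).choose (i + 1 + 1) = (M + 2).choose (i + 2) := by norm_num
    rw [hsub, hexp]
    push_cast
    linear_combination (-(x ^ (i + 2) * (1 - x) ^ (M - i) * ((i:R) + 1))) * hR1
      - (x ^ (i + 2) * (1 - x) ^ (M - i) * ((M : R) + 2)) * hR2
  rw [Finset.sum_congr rfl hcongr, ← Finset.mul_sum, bin1]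
  ring

end Binomial

/-! ### expanding a product of sums over functions -/

lemma prod_sum_fin {R : Type} [CommSemiring R] :
    ∀ {n : ℕ} {m : ℕ} [NeZero m] (F : Fin n → Fin m → R),
      (∏ i, ∑ ρ, F i ρ) = ∑ g : Fin n → Fin m, ∏ i, F i (g i) := by
  intro n
  induction n with
  | zero =>
      intro m _ F
      rw [Fintype.sum_unique fun g : Fin 0 → Fin m => ∏ i, F i (g i)]
      simp
  | succ n ih =>
      intro m _ F
      rw [Fin.prod_univ_succ, ih (fun i ρ => F i.succ ρ)]
      rw [Finset.sum_mul_sum]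
      rw [← Equiv.sum_comp (Fin.consEquiv (fun _ => Fin m))
        (fun g : Fin (n+1) → Fin m => ∏ i, F i (g i))]
      rw [Fintype.sum_prod_type]
      apply Finset.sum_congr rfl
      intro b _
      apply Finset.sum_congr rfl
      intro g' _
      show _ = ∏ i, F i ((Fin.consEquiv fun _ => Fin m) (b, g') i)
      simp only [Fin.consEquiv_apply]
      rw [Fin.prod_univ_succ]
      simp only [Fin.cons_zero, Fin.cons_succ]


/-! ### helpers for the backward direction -/

def kap : ℝ →+* A := algebraMap ℝ A

lemma kap_single (c : ℝ) : kap c = AddMonoidAlgebra.single 0 c := by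
  simp [kap, AddMonoidAlgebra.coe_algebraMap]

lemma P_kap_mul (ψ : ℝ → ℝ) (x c : ℝ) (b : A) :
    P ψ x (kap c * b) = c * P ψ x b := by
  rw [mul_comm, kap_single, P_mul_single, add_zero]

lemma prod_single_one {ι : Type} (B : Finset ι) (y : ι → ℝ) :
    ∏ k ∈ B, AddMonoidAlgebra.single (y k) (1:ℝ) = AddMonoidAlgebra.single (∑ k ∈ B, y k) 1 := by
  classical
  induction B using Finset.cons_induction with
  | empty =>
      simp only [Finset.prod_empty, Finset.sum_empty]
      rfl
  | cons i B hi ih =>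
      rw [Finset.prod_cons, ih, Finset.sum_cons, AddMonoidAlgebra.single_mul_single, one_mul]

lemma DP_flatMap {ι : Type} (l : List ι) (h : ι → List ℝ) :
    DP (l.flatMap h) = (l.map fun i => DP (h i)).prod := by
  induction l with
  | nil => rfl
  | cons i l ih =>
      rw [List.flatMap_cons, DP_append, List.map_cons, List.prod_cons, ih]

lemma DP_flatMap_fin {n : ℕ} (h : Fin n → List ℝ) :
    DP ((List.finRange n).flatMap h) = ∏ k : Fin n, DP (h k) := by
  rw [DP_flatMap, ← List.ofFn_eq_map, List.prod_ofFn]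


/-! ### the backward direction -/

section Backward

variable {n : ℕ}

def uu (s : Fin n → ℝ) (i : Fin n) : A := dl (s i)

def bse (s : Fin n → ℝ) (M : ℕ) (k : Fin n) (ρ : Fin (M+3)) : A :=
  uu s k ^ (ρ:ℕ) * (1 - uu s k) ^ (M + 2 - (ρ:ℕ)) * ((M+2).choose (ρ:ℕ) : A)

def NR (M : ℕ) : ℝ := (M:ℝ) + 2

lemma NR_pos (M : ℕ) : 0 < NR M := by unfold NR; positivity

def ww (M : ℕ) (i j k : Fin n) (ρ : Fin (M+3)) : ℝ :=
  (if k = i then ((ρ:ℕ):ℝ) / NR M else 1) * (if k = j then ((ρ:ℕ):ℝ) / NR M else 1)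

def TT (s : Fin n → ℝ) (M : ℕ) (i j k : Fin n) : A :=
  ∑ ρ : Fin (M+3), kap (ww M i j k ρ) * bse s M k ρ

def VV (ψ : ℝ → ℝ) (s : Fin n → ℝ) (M : ℕ) (g : Fin n → Fin (M+3)) : ℝ :=
  P ψ 0 (∏ k, bse s M k (g k))

lemma sumbse1 (s : Fin n → ℝ) (M : ℕ) (k : Fin n) :
    ∑ ρ : Fin (M+3), bse s M k ρ = 1 := by
  have h := Fin.sum_univ_eq_sum_range
    (fun p => uu s k ^ p * (1 - uu s k) ^ (M + 2 - p) * ((M+2).choose p : A)) (M+3)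
  exact h.trans (bin1 (uu s k) (M+2))

lemma sumbse2 (s : Fin n → ℝ) (M : ℕ) (k : Fin n) :
    ∑ ρ : Fin (M+3), ((ρ:ℕ) : A) * bse s M k ρ = ((M+2 : ℕ) : A) * uu s k := by
  have h := Fin.sum_univ_eq_sum_range
    (fun p => (p : A) * (uu s k ^ p * (1 - uu s k) ^ (M + 2 - p) * ((M+2).choose p : A))) (M+3)
  have h2 := bin2 (uu s k) (M+1)
  rw [show ((M+2:ℕ) : A) * uu s k = (((M+1:ℕ):A) + 1) * uu s k by push_cast; ring]
  refine h.trans ?_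
  refine Eq.trans ?_ (by exact_mod_cast h2)
  rfl

lemma sumbse3 (s : Fin n → ℝ) (M : ℕ) (k : Fin n) :
    ∑ ρ : Fin (M+3), ((ρ:ℕ) : A) * ((ρ:ℕ) : A) * bse s M k ρ
      = ((M+2 : ℕ) : A) * ((M+1 : ℕ) : A) * (uu s k * uu s k) + ((M+2 : ℕ) : A) * uu s k := by
  have hsplit : ∀ ρ : Fin (M+3), ((ρ:ℕ) : A) * ((ρ:ℕ) : A) * bse s M k ρ
      = ((ρ:ℕ) : A) * (((ρ:ℕ) : A) - 1) * bse s M k ρ + ((ρ:ℕ) : A) * bse s M k ρ := by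
    intro ρ; ring
  rw [Finset.sum_congr rfl (fun ρ _ => hsplit ρ), Finset.sum_add_distrib, sumbse2]
  congr 1
  have h := Fin.sum_univ_eq_sum_range
    (fun p => (p : A) * ((p : A) - 1) *
      (uu s k ^ p * (1 - uu s k) ^ (M + 2 - p) * ((M+2).choose p : A))) (M+3)
  have h3 := bin3 (uu s k) M
  rw [show ((M+2:ℕ) : A) * ((M+1:ℕ) : A) * (uu s k * uu s k)
    = ((M:A) + 2) * ((M:A) + 1) * (uu s k * uu s k) by push_cast; ring]
  exact h.trans h3

lemma kap_div_nat (M : ℕ) (p : ℕ) :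
    kap ((p : ℝ) / NR M) = kap (1 / NR M) * (p : A) := by
  rw [show (p : ℝ) / NR M = (1 / NR M) * (p : ℝ) by ring, map_mul, map_natCast]

lemma T_diag_aux (s : Fin n → ℝ) (M : ℕ) (k : Fin n) :
    ∑ ρ : Fin (M+3), kap (((ρ:ℕ):ℝ) / NR M) * bse s M k ρ = uu s k := by
  have hNR : ((M+2:ℕ) : ℝ) = NR M := by unfold NR; push_cast; ring
  calc ∑ ρ : Fin (M+3), kap (((ρ:ℕ):ℝ) / NR M) * bse s M k ρ
      = ∑ ρ : Fin (M+3), kap (1 / NR M) * (((ρ:ℕ):A) * bse s M k ρ) := by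
        apply Finset.sum_congr rfl
        intro ρ _
        rw [kap_div_nat, mul_assoc]
    _ = kap (1 / NR M) * (((M+2:ℕ) : A) * uu s k) := by
        rw [← Finset.mul_sum, sumbse2]
    _ = (kap (1 / NR M) * kap ((M+2:ℕ) : ℝ)) * uu s k := by
        rw [map_natCast]; ring
    _ = uu s k := by
        rw [← map_mul, hNR, one_div, inv_mul_cancel₀ (ne_of_gt (NR_pos M)), map_one, one_mul]

lemma T_off (s : Fin n → ℝ) (M : ℕ) {i j k : Fin n} (hki : k ≠ i) (hkj : k ≠ j) :
    TT s M i j k = 1 := by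
  unfold TT ww
  simp only [if_neg hki, if_neg hkj, one_mul, map_one]
  exact sumbse1 s M k

lemma T_i (s : Fin n → ℝ) (M : ℕ) {i j : Fin n} (hij : i ≠ j) :
    TT s M i j i = uu s i := by
  unfold TT ww
  simp only [if_pos rfl, if_neg hij, mul_one]
  exact T_diag_aux s M i

lemma T_j (s : Fin n → ℝ) (M : ℕ) {i j : Fin n} (hij : j ≠ i) :
    TT s M i j j = uu s j := by
  unfold TT ww
  simp only [if_pos rfl, if_neg hij, one_mul]
  exact T_diag_aux s M j

lemma T_diag (s : Fin n → ℝ) (M : ℕ) (i : Fin n) :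
    TT s M i i i = kap (1 - 1 / NR M) * (uu s i * uu s i) + kap (1 / NR M) * uu s i := by
  have hNR : ((M+2:ℕ) : ℝ) = NR M := by unfold NR; push_cast; ring
  have hNR1 : ((M+1:ℕ) : ℝ) = NR M - 1 := by unfold NR; push_cast; ring
  have hne := ne_of_gt (NR_pos M)
  unfold TT ww
  simp only [if_pos rfl]
  calc ∑ ρ : Fin (M+3), kap (((ρ:ℕ):ℝ) / NR M * (((ρ:ℕ):ℝ) / NR M)) * bse s M i ρ
      = ∑ ρ : Fin (M+3), kap (1 / (NR M * NR M))
          * (((ρ:ℕ):A) * ((ρ:ℕ):A) * bse s M i ρ) := by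
        apply Finset.sum_congr rfl
        intro ρ _
        rw [show ((ρ:ℕ):ℝ) / NR M * (((ρ:ℕ):ℝ) / NR M)
          = (1 / (NR M * NR M)) * (((ρ:ℕ):ℝ) * ((ρ:ℕ):ℝ)) by ring, map_mul, map_mul,
          map_natCast]
        ring
    _ = kap (1 / (NR M * NR M))
          * (((M+2:ℕ) : A) * ((M+1:ℕ) : A) * (uu s i * uu s i) + ((M+2:ℕ) : A) * uu s i) := by
        rw [← Finset.mul_sum, sumbse3]
    _ = kap (1 - 1 / NR M) * (uu s i * uu s i) + kap (1 / NR M) * uu s i := by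
        have e1 : kap (1 / (NR M * NR M)) * (((M+2:ℕ):A) * ((M+1:ℕ):A)) = kap (1 - 1/NR M) := by
          rw [← map_natCast kap (M+2), ← map_natCast kap (M+1), ← map_mul, ← map_mul]
          congr 1
          rw [hNR, hNR1]
          field_simp
        have e2 : kap (1 / (NR M * NR M)) * ((M+2:ℕ):A) = kap (1 / NR M) := by
          rw [← map_natCast kap (M+2), ← map_mul]
          congr 1
          rw [hNR]
          field_simp
        calc kap (1 / (NR M * NR M))
              * (((M+2:ℕ) : A) * ((M+1:ℕ) : A) * (uu s i * uu s i) + ((M+2:ℕ) : A) * uu s i)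
            = (kap (1 / (NR M * NR M)) * (((M+2:ℕ):A) * ((M+1:ℕ):A))) * (uu s i * uu s i)
              + (kap (1 / (NR M * NR M)) * ((M+2:ℕ):A)) * uu s i := by ring
          _ = kap (1 - 1 / NR M) * (uu s i * uu s i) + kap (1 / NR M) * uu s i := by
              rw [e1, e2]


lemma eval_off (ψ : ℝ → ℝ) (s : Fin n → ℝ) (M : ℕ) {i j : Fin n} (hij : i ≠ j) :
    P ψ 0 (∏ k, TT s M i j k) = ψ (s i + s j) := by
  classical
  have hfac : ∀ k, TT s M i j k
      = (if k = i then uu s i else 1) * (if k = j then uu s j else 1) := by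
    intro k
    by_cases hki : k = i
    · subst hki
      rw [if_pos rfl, if_neg hij, mul_one]
      exact T_i s M hij
    · by_cases hkj : k = j
      · subst hkj
        rw [if_neg hki, if_pos rfl, one_mul]
        exact T_j s M hki
      · rw [if_neg hki, if_neg hkj, mul_one]
        exact T_off s M hki hkj
  rw [Finset.prod_congr rfl (fun k _ => hfac k), Finset.prod_mul_distrib,
    Finset.prod_ite_eq' Finset.univ i (fun _ => uu s i),
    Finset.prod_ite_eq' Finset.univ j (fun _ => uu s j),
    if_pos (Finset.mem_univ i), if_pos (Finset.mem_univ j)]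
  rw [show uu s i * uu s j = AddMonoidAlgebra.single (s i + s j) 1 by
    unfold uu dl
    rw [AddMonoidAlgebra.single_mul_single, one_mul]]
  rw [P_single, one_mul, zero_add]

lemma eval_diag (ψ : ℝ → ℝ) (s : Fin n → ℝ) (M : ℕ) (i : Fin n) :
    P ψ 0 (∏ k, TT s M i i k)
      = ψ (s i + s i) + (1 / NR M) * (ψ (s i) - ψ (s i + s i)) := by
  classical
  rw [Finset.prod_eq_single_of_mem i (Finset.mem_univ i)
    (fun k _ hk => T_off s M hk hk)]
  rw [T_diag, P_add, P_kap_mul, P_kap_mul]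
  rw [show uu s i * uu s i = AddMonoidAlgebra.single (s i + s i) 1 by
    unfold uu dl
    rw [AddMonoidAlgebra.single_mul_single, one_mul]]
  unfold uu dl
  rw [P_single, P_single, one_mul, one_mul, zero_add, zero_add]
  ring

lemma flat_expand (ψ : ℝ → ℝ) (s : Fin n → ℝ) (M : ℕ) (i j : Fin n) :
    P ψ 0 (∏ k, TT s M i j k)
      = ∑ g : Fin n → Fin (M+3), (∏ k, ww M i j k (g k)) * VV ψ s M g := by
  unfold TT
  rw [prod_sum_fin (fun k ρ => kap (ww M i j k ρ) * bse s M k ρ), P_sum]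
  apply Finset.sum_congr rfl
  intro g _
  rw [Finset.prod_mul_distrib, ← map_prod kap (fun k => ww M i j k (g k)) Finset.univ,
    P_kap_mul]
  rfl

lemma wprod (M : ℕ) (i j : Fin n) (g : Fin n → Fin (M+3)) :
    (∏ k, ww M i j k (g k)) = (((g i : ℕ):ℝ) / NR M) * (((g j : ℕ):ℝ) / NR M) := by
  classical
  unfold ww
  rw [Finset.prod_mul_distrib,
    Finset.prod_ite_eq' Finset.univ i (fun k => ((g k : ℕ):ℝ) / NR M),
    Finset.prod_ite_eq' Finset.univ j (fun k => ((g k : ℕ):ℝ) / NR M),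
    if_pos (Finset.mem_univ i), if_pos (Finset.mem_univ j)]

lemma V_nonpos {ψ : ℝ → ℝ} (hAlt : ∀ (L : List ℝ), L ≠ [] → (∀ y ∈ L, 0 ≤ y) →
      ∀ σ : ℝ, 0 ≤ σ → P ψ σ (DP L) ≤ 0)
    {s : Fin n → ℝ} (hs : ∀ i, 0 ≤ s i) (M : ℕ) {g : Fin n → Fin (M+3)}
    (hg : g ≠ fun _ => Fin.last (M+2)) : VV ψ s M g ≤ 0 := by
  classical
  obtain ⟨k₀, hk₀⟩ := Function.ne_iff.mp hg
  have hk₀lt : (g k₀ : ℕ) < M + 2 := by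
    have h1 : (g k₀ : ℕ) ≤ M + 2 := Fin.is_le (g k₀)
    have h2 : (g k₀ : ℕ) ≠ M + 2 := by
      intro h
      apply hk₀
      apply Fin.ext
      rw [h]
      rfl
    omega
  set bigL : List ℝ := (List.finRange n).flatMap
    (fun k => List.replicate (M + 2 - (g k : ℕ)) (s k)) with hbigL
  set xg : ℝ := ∑ k, ((g k : ℕ) : ℝ) * s k with hxg
  have hterm : ∏ k, bse s M k (g k)
      = AddMonoidAlgebra.single xg 1 * DP bigL
        * ((∏ k, (M+2).choose (g k : ℕ) : ℕ) : A) := by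
    unfold bse
    rw [Finset.prod_mul_distrib, Finset.prod_mul_distrib]
    congr 1
    · congr 1
      · -- ∏ u^g = single xg 1
        have h1 : ∀ k : Fin n, uu s k ^ (g k : ℕ)
            = AddMonoidAlgebra.single (((g k : ℕ) : ℝ) * s k) (1:ℝ) := by
          intro k
          unfold uu dl
          rw [AddMonoidAlgebra.single_pow, one_pow, nsmul_eq_mul]
        rw [Finset.prod_congr rfl (fun k _ => h1 k),
          prod_single_one Finset.univ (fun k => ((g k : ℕ) : ℝ) * s k)]
      · -- ∏ (1-u)^(N-g) = DP bigL
        rw [hbigL, DP_flatMap_fin]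
        apply Finset.prod_congr rfl
        intro k _
        rw [DP_replicate]
        rfl
    · rw [Nat.cast_prod]
  have hV : VV ψ s M g
      = ((∏ k, (M+2).choose (g k : ℕ) : ℕ) : ℝ) * P ψ xg (DP bigL) := by
    unfold VV
    rw [hterm]
    rw [← map_natCast kap (∏ k, (M+2).choose (g k : ℕ))]
    rw [show AddMonoidAlgebra.single xg 1 * DP bigL * kap ((∏ k, (M+2).choose (g k : ℕ) : ℕ) : ℝ)
      = kap ((∏ k, (M+2).choose (g k : ℕ) : ℕ) : ℝ) * (dl xg * DP bigL) by unfold dl; ring]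
    rw [P_kap_mul, P_dl_mul, zero_add]
  rw [hV]
  have hC : (0:ℝ) ≤ ((∏ k, (M+2).choose (g k : ℕ) : ℕ) : ℝ) := Nat.cast_nonneg _
  have hmem : s k₀ ∈ bigL := by
    rw [hbigL]
    rw [List.mem_flatMap]
    exact ⟨k₀, List.mem_finRange k₀, List.mem_replicate.mpr ⟨by omega, rfl⟩⟩
  have hne : bigL ≠ [] := List.ne_nil_of_mem hmem
  have hnnL : ∀ y ∈ bigL, 0 ≤ y := by
    intro y hy
    rw [hbigL, List.mem_flatMap] at hy
    obtain ⟨k, _, hyk⟩ := hy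
    rw [(List.mem_replicate.mp hyk).2]
    exact hs k
  have hxg0 : 0 ≤ xg := by
    rw [hxg]
    apply Finset.sum_nonneg
    intro k _
    exact mul_nonneg (Nat.cast_nonneg _) (hs k)
  exact mul_nonpos_of_nonneg_of_nonpos hC (hAlt bigL hne hnnL xg hxg0)


lemma key_ineq {ψ : ℝ → ℝ} (hAlt : ∀ (L : List ℝ), L ≠ [] → (∀ y ∈ L, 0 ≤ y) →
      ∀ σ : ℝ, 0 ≤ σ → P ψ σ (DP L) ≤ 0)
    {s : Fin n → ℝ} (hs : ∀ i, 0 ≤ s i) {a : Fin n → ℝ} (ha : ∑ i, a i = 0) (M : ℕ) :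
    (∑ i, ∑ j, a i * a j * ψ (s i + s j))
      ≤ (1 / NR M) * ∑ i, a i * a i * (ψ (s i + s i) - ψ (s i)) := by
  classical
  set Q := ∑ i, ∑ j, a i * a j * ψ (s i + s j) with hQdef
  set LHSN := ∑ i, ∑ j, a i * a j * P ψ 0 (∏ k, TT s M i j k) with hLHSN
  have E1 : LHSN = Q + ∑ i, a i * a i * ((1 / NR M) * (ψ (s i) - ψ (s i + s i))) := by
    have per : ∀ i j : Fin n, P ψ 0 (∏ k, TT s M i j k)
        = ψ (s i + s j) + (if i = j then (1 / NR M) * (ψ (s i) - ψ (s i + s i)) else 0) := by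
      intro i j
      by_cases hij : i = j
      · subst hij
        rw [eval_diag, if_pos rfl]
      · rw [eval_off ψ s M hij, if_neg hij, add_zero]
    have split : LHSN = (∑ i, ∑ j, a i * a j * ψ (s i + s j))
        + ∑ i, ∑ j, a i * a j
            * (if i = j then (1 / NR M) * (ψ (s i) - ψ (s i + s i)) else 0) := by
      rw [hLHSN, ← Finset.sum_add_distrib]
      apply Finset.sum_congr rfl
      intro i _
      rw [← Finset.sum_add_distrib]
      apply Finset.sum_congr rfl
      intro j _
      rw [per i j]
      ring
    rw [split]
    congr 1
    apply Finset.sum_congr rfl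
    intro i _
    have inner : ∀ j : Fin n, a i * a j
          * (if i = j then (1 / NR M) * (ψ (s i) - ψ (s i + s i)) else 0)
        = (if i = j then a i * a j * ((1 / NR M) * (ψ (s i) - ψ (s i + s i))) else 0) := by
      intro j
      by_cases hij : i = j
      · rw [if_pos hij, if_pos hij]
      · rw [if_neg hij, if_neg hij, mul_zero]
    rw [Finset.sum_congr rfl (fun j _ => inner j),
      Finset.sum_ite_eq Finset.univ i
        (fun j => a i * a j * ((1 / NR M) * (ψ (s i) - ψ (s i + s i)))),
      if_pos (Finset.mem_univ i)]
  have E2 : LHSN ≤ 0 := by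
    set wt : (Fin n → Fin (M+3)) → ℝ := fun g => ∑ i, a i * (((g i : ℕ) : ℝ) / NR M) with hwt
    have flatL : LHSN = ∑ g : Fin n → Fin (M+3), wt g * wt g * VV ψ s M g := by
      have step1 : LHSN = ∑ i, ∑ j, ∑ g : Fin n → Fin (M+3),
          (a i * (((g i : ℕ) : ℝ) / NR M)) * (a j * (((g j : ℕ) : ℝ) / NR M))
            * VV ψ s M g := by
        rw [hLHSN]
        apply Finset.sum_congr rfl
        intro i _
        apply Finset.sum_congr rfl
        intro j _
        rw [flat_expand, Finset.mul_sum]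
        apply Finset.sum_congr rfl
        intro g _
        rw [wprod]
        ring
      rw [step1]
      have step2' : ∀ i, (∑ j, ∑ g : Fin n → Fin (M+3),
          (a i * (((g i : ℕ) : ℝ) / NR M)) * (a j * (((g j : ℕ) : ℝ) / NR M)) * VV ψ s M g)
          = ∑ g : Fin n → Fin (M+3), ∑ j,
            (a i * (((g i : ℕ) : ℝ) / NR M)) * (a j * (((g j : ℕ) : ℝ) / NR M))
              * VV ψ s M g := by
        intro i
        exact Finset.sum_comm
      rw [Finset.sum_congr rfl (fun i _ => step2' i)]
      refine Eq.trans Finset.sum_comm ?_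
      apply Finset.sum_congr rfl
      intro g _
      have e : wt g * wt g * VV ψ s M g
          = ∑ i, ∑ j, (a i * (((g i : ℕ) : ℝ) / NR M)) * (a j * (((g j : ℕ) : ℝ) / NR M))
              * VV ψ s M g := by
        rw [hwt]
        rw [Finset.sum_mul_sum Finset.univ Finset.univ
          (fun i => a i * (((g i : ℕ) : ℝ) / NR M))
          (fun j => a j * (((g j : ℕ) : ℝ) / NR M))]
        rw [Finset.sum_mul]
        apply Finset.sum_congr rfl
        intro i _
        rw [Finset.sum_mul]
      exact e.symm
    rw [flatL]
    apply Finset.sum_nonpos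
    intro g _
    by_cases hg : g = fun _ => Fin.last (M+2)
    · have hgi : ∀ i : Fin n, g i = Fin.last (M+2) := fun i => by rw [hg]
      have hterm : ∀ i : Fin n, a i * (((g i : ℕ) : ℝ) / NR M) = a i := by
        intro i
        rw [hgi i, Fin.val_last,
          show (((M+2:ℕ)) : ℝ) = NR M from by unfold NR; push_cast; ring,
          div_self (ne_of_gt (NR_pos M)), mul_one]
      have hwt0 : wt g = 0 := by
        show (∑ i, a i * (((g i : ℕ) : ℝ) / NR M)) = 0
        rw [Finset.sum_congr rfl (fun i _ => hterm i)]
        exact ha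
      rw [hwt0]
      simp
    · exact mul_nonpos_of_nonneg_of_nonpos (mul_self_nonneg (wt g))
        (V_nonpos hAlt hs M hg)
  have hcorr : (∑ i, a i * a i * ((1 / NR M) * (ψ (s i) - ψ (s i + s i))))
      = -((1 / NR M) * ∑ i, a i * a i * (ψ (s i + s i) - ψ (s i))) := by
    rw [Finset.mul_sum, ← Finset.sum_neg_distrib]
    apply Finset.sum_congr rfl
    intro i _
    ring
  rw [E1, hcorr] at E2
  linarith


lemma alt_to_negdef {ψ : ℝ → ℝ}
    (hAlt : ∀ (L : List ℝ), L ≠ [] → (∀ y ∈ L, 0 ≤ y) →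
      ∀ σ : ℝ, 0 ≤ σ → P ψ σ (DP L) ≤ 0) :
    NegDefHalfLine' ψ := by
  intro n s hs a ha
  by_contra hQc
  push_neg at hQc
  set Q := ∑ i, ∑ j, a i * a j * ψ (s i + s j) with hQdef
  set c := ∑ i, a i * a i * (ψ (s i + s i) - ψ (s i)) with hc
  obtain ⟨N₀, hN₀⟩ := exists_nat_gt (c / Q)
  have h1 : Q ≤ (1 / NR N₀) * c := key_ineq hAlt hs ha N₀
  have hNRpos := NR_pos N₀
  have h2 : c / Q < NR N₀ := by
    have h2' : ((N₀:ℝ)) < NR N₀ := by unfold NR; linarith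
    linarith
  have h3 : c < NR N₀ * Q := (div_lt_iff₀ hQc).mp h2
  have h4 : (1 / NR N₀) * c < Q := by
    have h4' : (1 / NR N₀) * c = c / NR N₀ := by ring
    rw [h4', div_lt_iff₀ hNRpos]
    linarith
  linarith

end Backward

end Stmt2Aux

/-- A function `f : [0,∞) → ℝ` (modeled as `ℝ → ℝ`, with all arguments nonnegative)
is `n`-alternating if `∑_{A ⊆ {1,…,n}} (−1)^{|A|} f(s + ∑_{i∈A} sᵢ) ≤ 0`
for all `s, s₁, …, sₙ ≥ 0`. -/
def NAlternating (n : ℕ) (f : ℝ → ℝ) : Prop :=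
  ∀ s : ℝ, 0 ≤ s → ∀ t : Fin n → ℝ, (∀ i, 0 ≤ t i) →
    ∑ A : Finset (Fin n), (-1 : ℝ) ^ A.card * f (s + ∑ i ∈ A, t i) ≤ 0

/-- `ψ : [0,∞) → ℝ` is negative definite on the additive semigroup `([0,∞), +)`:
for all `n`, all `s₁,…,sₙ ≥ 0` and `a₁,…,aₙ ∈ ℝ` with `∑ aᵢ = 0`,
`∑ᵢ∑ⱼ aᵢ aⱼ ψ(sᵢ + sⱼ) ≤ 0`. -/
def NegDefHalfLine (ψ : ℝ → ℝ) : Prop :=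
  ∀ (n : ℕ) (s : Fin n → ℝ), (∀ i, 0 ≤ s i) → ∀ a : Fin n → ℝ,
    ∑ i, a i = 0 → ∑ i, ∑ j, a i * a j * ψ (s i + s j) ≤ 0

theorem stmt_2 (ψ : ℝ → ℝ) (hbdd : ∃ m : ℝ, ∀ x : ℝ, 0 ≤ x → m ≤ ψ x) :
    NegDefHalfLine ψ ↔ ∀ n : ℕ, 1 ≤ n → NAlternating n ψ := by
  constructor
  · intro hND n hn
    obtain ⟨m, hm⟩ := hbdd
    intro σ hσ t ht
    rw [← Stmt2Aux.bridge ψ σ t, ← Stmt2Aux.DP_ofFn]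
    have hne : List.ofFn t ≠ [] := by
      intro h
      have h0 : (List.ofFn t).length = 0 := by rw [h]; rfl
      rw [List.length_ofFn] at h0
      omega
    have hmem : ∀ y ∈ List.ofFn t, (0:ℝ) ≤ y := by
      intro y hy
      rw [List.mem_ofFn] at hy
      obtain ⟨i, hi⟩ := hy
      rw [← hi]
      exact ht i
    exact Stmt2Aux.main_alt hND hm (Stmt2Aux.oddCard (List.ofFn t)) (List.ofFn t)
      rfl hne hmem σ hσ
  · intro hAlt
    apply Stmt2Aux.alt_to_negdef
    intro L hne hnnL σ hσ
    have hlen : 1 ≤ L.length := by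
      cases L with
      | nil => exact absurd rfl hne
      | cons a l => simp
    have h1 := hAlt L.length hlen σ hσ (fun i => L.get i)
      (fun i => hnnL _ (List.get_mem L i))
    rw [Stmt2Aux.DP_eq_prod_get, Stmt2Aux.bridge]
    exact h1
end
end

section
/- Let ψ : [0,∞) → ℝ satisfy ψ(0) = 0 and be 1-, 2- and 3-alternating (as is every Bernstein function). Let R₁,…,R_d > 0, let K = ∏_{i=1}^d [−Rᵢ, Rᵢ] ⊂ ℝ^d with vertices v_A indexed by subsets A ⊆ {1,…,d}, and let C₀ : ℝ^d × ℝ^d → ℝ be a symmetric kernel with C₀(x, 0) = 0 for all x ∈ ℝ^d and C₀(x,x) − 2 C₀(x,y) + C₀(y,y) = ψ(‖x−y‖²) for all x, y ∈ ℝ^d. Define the modified kernel C(x,y) = C₀(x,y) − 2^{−d} Σ_{A ⊆ {1,…,d}} (C₀(x, v_A) + C₀(y, v_A)) + 2^{−2d} Σ_{A ⊆ {1,…,d}} Σ_{B ⊆ {1,…,d}} C₀(v_A, v_B). Then for every x ∈ K one has C(x,x) ≤ ψ(R₁² + ⋯ + R_d²); since C₀(y,y) = ψ(‖y‖²) on K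 and ψ is nondecreasing, the right-hand side equals sup_{y ∈ K} C₀(y,y). -/
open scoped symmDiff

lemma mono_of_alt (ψ : ℝ → ℝ) (h1 : NAlternating 1 ψ) :
    ∀ x t : ℝ, 0 ≤ x → 0 ≤ t → ψ x ≤ ψ (x + t) := by
  intro x t hx ht
  have h := h1 x hx (fun _ => t) (fun _ => ht)
  have e : (Finset.univ : Finset (Finset (Fin 1))) = {∅, {0}} := by decide
  rw [e, Finset.sum_insert (by decide), Finset.sum_singleton] at h
  norm_num at h
  linarith

lemma conc_of_alt (ψ : ℝ → ℝ) (h2 : NAlternating 2 ψ) :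
    ∀ x δ t : ℝ, 0 ≤ x → 0 ≤ δ → 0 ≤ t →
      ψ (x + δ + t) - ψ (x + δ) ≤ ψ (x + t) - ψ x := by
  intro x δ t hx hδ ht
  have h := h2 x hx ![δ, t] (by
    intro i
    fin_cases i <;> simpa)
  have e : (Finset.univ : Finset (Finset (Fin 2))) =
      {∅, {0}, {1}, {0, 1}} := by decide
  rw [e, Finset.sum_insert (by decide), Finset.sum_insert (by decide),
    Finset.sum_insert (by decide), Finset.sum_singleton] at h
  norm_num [Finset.sum_pair (show (0 : Fin 2) ≠ 1 by decide)] at h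
  rw [show x + δ + t = x + (δ + t) by ring]
  linarith

/-- The central one-coordinate inequality, proved from monotonicity and
concavity-type (2-alternating) difference inequalities. -/
lemma J2_of_alt (ψ : ℝ → ℝ)
    (mono : ∀ x t : ℝ, 0 ≤ x → 0 ≤ t → ψ x ≤ ψ (x + t))
    (conc : ∀ x δ t : ℝ, 0 ≤ x → 0 ≤ δ → 0 ≤ t →
      ψ (x + δ + t) - ψ (x + δ) ≤ ψ (x + t) - ψ x) :
    ∀ s m τ u w p : ℝ, 0 ≤ s → 0 ≤ m → 0 ≤ τ →
      0 ≤ u → 0 ≤ w → 2 * p ≤ u + w → 3 * u + w ≤ 4 * p →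
      ψ (s + u + m) + ψ (s + w + m) + ψ (s + u + τ) / 2 + ψ (s + w + τ) / 2 ≤
        2 * ψ (s + p + m) + ψ (s + u) / 2 + ψ (s + w) / 2 - ψ s
          + ψ (s + τ) / 2 + ψ (s + 4 * p + τ) / 2 := by
  intro s m τ u w p hs hm hτ hu hw hup h3
  have hup' : u ≤ p := by linarith
  have P3 := conc (s + u + m) (p - u) (p - u) (by linarith) (by linarith) (by linarith)
  rw [show s + u + m + (p - u) = s + p + m by ring] at P3
  have P4a := conc (s + p + (p - u)) m (u + w - 2 * p) (by linarith) hm (by linarith)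
  rw [show s + p + (p - u) + m = s + p + m + (p - u) by ring,
      show s + p + m + (p - u) + (u + w - 2 * p) = s + w + m by ring,
      show s + p + (p - u) + (u + w - 2 * p) = s + w by ring] at P4a
  have P4b := conc (s + (4 * p - 2 * u - w)) (u + w - 2 * p) (u + w - 2 * p)
    (by linarith) (by linarith) (by linarith)
  rw [show s + (4 * p - 2 * u - w) + (u + w - 2 * p) = s + p + (p - u) by ring,
      show s + p + (p - u) + (u + w - 2 * p) = s + w by ring] at P4b
  have P4c := mono s (4 * p - 2 * u - w) hs (by linarith)
  have P1 := conc s τ u hs hτ hu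
  rw [show s + τ + u = s + u + τ by ring] at P1
  have P2 := mono (s + w + τ) (4 * p - w) (by linarith) (by linarith)
  rw [show s + w + τ + (4 * p - w) = s + 4 * p + τ by ring] at P2
  linarith

/-- Key combinatorial inequality, by induction over the set of coordinates. -/
lemma key_ineq (ψ : ℝ → ℝ)
    (J2 : ∀ s m τ u w p : ℝ, 0 ≤ s → 0 ≤ m → 0 ≤ τ →
      0 ≤ u → 0 ≤ w → 2 * p ≤ u + w → 3 * u + w ≤ 4 * p →
      ψ (s + u + m) + ψ (s + w + m) + ψ (s + u + τ) / 2 + ψ (s + w + τ) / 2 ≤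
        2 * ψ (s + p + m) + ψ (s + u) / 2 + ψ (s + w) / 2 - ψ s
          + ψ (s + τ) / 2 + ψ (s + 4 * p + τ) / 2)
    {d : ℕ} (a b p : Fin d → ℝ) :
    ∀ T : Finset (Fin d),
      (∀ i ∈ T, 0 ≤ a i ∧ 0 ≤ b i ∧ 2 * p i ≤ a i + b i ∧
        a i + b i + 2 * min (a i) (b i) ≤ 4 * p i) →
      ∀ s : ℝ, 0 ≤ s →
      ∑ A ∈ T.powerset, ψ (s + (∑ i ∈ A, a i + ∑ i ∈ T \ A, b i))
        ≤ 2 ^ T.card * ψ (s + ∑ i ∈ T, p i) - 2 ^ T.card / 2 * ψ s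
          + (∑ C ∈ T.powerset, ψ (s + ∑ i ∈ C, 4 * p i)) / 2 := by
  intro T
  induction T using Finset.induction_on with
  | empty =>
      intro _ s hs
      simp
      linarith
  | @insert i T hiT ih =>
      intro hcond s hs
      obtain ⟨ha0, hb0, hab, habm⟩ := hcond i (Finset.mem_insert_self i T)
      have hcondT : ∀ j ∈ T, 0 ≤ a j ∧ 0 ≤ b j ∧ 2 * p j ≤ a j + b j ∧
          a j + b j + 2 * min (a j) (b j) ≤ 4 * p j :=
        fun j hj => hcond j (Finset.mem_insert_of_mem hj)
      have hmin : 0 ≤ min (a i) (b i) := le_min ha0 hb0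
      have hpi : 0 ≤ p i := by linarith
      have hpT : ∀ j ∈ T, 0 ≤ p j := by
        intro j hj
        obtain ⟨h1, h2, h3, h4⟩ := hcondT j hj
        have : 0 ≤ min (a j) (b j) := le_min h1 h2
        linarith
      have hm0 : 0 ≤ ∑ j ∈ T, p j := Finset.sum_nonneg hpT
      rw [Finset.sum_powerset_insert hiT]
      have L1 : ∑ A ∈ T.powerset, ψ (s + (∑ j ∈ A, a j + ∑ j ∈ insert i T \ A, b j))
          = ∑ A ∈ T.powerset, ψ (s + b i + (∑ j ∈ A, a j + ∑ j ∈ T \ A, b j)) := by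
        refine Finset.sum_congr rfl fun A hA => ?_
        have hiA : i ∉ A := fun h => hiT (Finset.mem_powerset.mp hA h)
        rw [Finset.insert_sdiff_of_notMem _ hiA,
          Finset.sum_insert (by simp [hiT]),
          show s + (∑ j ∈ A, a j + (b i + ∑ j ∈ T \ A, b j))
            = s + b i + (∑ j ∈ A, a j + ∑ j ∈ T \ A, b j) by ring]
      have L2 : ∑ A ∈ T.powerset,
            ψ (s + (∑ j ∈ insert i A, a j + ∑ j ∈ insert i T \ insert i A, b j))
          = ∑ A ∈ T.powerset, ψ (s + a i + (∑ j ∈ A, a j + ∑ j ∈ T \ A, b j)) := by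
        refine Finset.sum_congr rfl fun A hA => ?_
        have hiA : i ∉ A := fun h => hiT (Finset.mem_powerset.mp hA h)
        rw [Finset.insert_sdiff_insert, Finset.sdiff_insert_of_notMem hiT,
          Finset.sum_insert hiA,
          show s + (a i + ∑ j ∈ A, a j + ∑ j ∈ T \ A, b j)
            = s + a i + (∑ j ∈ A, a j + ∑ j ∈ T \ A, b j) by ring]
      rw [L1, L2]
      have iha := ih hcondT (s + a i) (by linarith)
      have ihb := ih hcondT (s + b i) (by linarith)
      rw [Finset.card_insert_of_notMem hiT, Finset.sum_insert hiT,
        Finset.sum_powerset_insert hiT,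
        show s + (p i + ∑ j ∈ T, p j) = s + p i + ∑ j ∈ T, p j by ring]
      have R1 : ∑ C ∈ T.powerset, ψ (s + ∑ j ∈ insert i C, 4 * p j)
          = ∑ C ∈ T.powerset, ψ (s + 4 * p i + ∑ j ∈ C, 4 * p j) := by
        refine Finset.sum_congr rfl fun C hC => ?_
        have hiC : i ∉ C := fun h => hiT (Finset.mem_powerset.mp hC h)
        rw [Finset.sum_insert hiC,
          show s + (4 * p i + ∑ j ∈ C, 4 * p j) = s + 4 * p i + ∑ j ∈ C, 4 * p j by ring]
      rw [R1]
      have HJ : ∑ C ∈ T.powerset,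
            (ψ (s + a i + ∑ j ∈ T, p j) + ψ (s + b i + ∑ j ∈ T, p j)
              + ψ (s + a i + ∑ j ∈ C, 4 * p j) / 2 + ψ (s + b i + ∑ j ∈ C, 4 * p j) / 2)
          ≤ ∑ C ∈ T.powerset,
            (2 * ψ (s + p i + ∑ j ∈ T, p j) + ψ (s + a i) / 2 + ψ (s + b i) / 2 - ψ s
              + ψ (s + ∑ j ∈ C, 4 * p j) / 2 + ψ (s + 4 * p i + ∑ j ∈ C, 4 * p j) / 2) := by
        refine Finset.sum_le_sum fun C hC => ?_
        have hτ : 0 ≤ ∑ j ∈ C, 4 * p j := by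
          refine Finset.sum_nonneg fun j hj => ?_
          have := hpT j (Finset.mem_powerset.mp hC hj)
          linarith
        rcases le_total (a i) (b i) with hab' | hab'
        · have hm' : min (a i) (b i) = a i := min_eq_left hab'
          have := J2 s (∑ j ∈ T, p j) (∑ j ∈ C, 4 * p j) (a i) (b i) (p i)
            hs hm0 hτ ha0 hb0 hab (by rw [hm'] at habm; linarith)
          linarith
        · have hm' : min (a i) (b i) = b i := min_eq_right hab'
          have := J2 s (∑ j ∈ T, p j) (∑ j ∈ C, 4 * p j) (b i) (a i) (p i)
            hs hm0 hτ hb0 ha0 (by linarith) (by rw [hm'] at habm; linarith)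
          linarith
      have card_pow : (T.powerset.card : ℝ) = 2 ^ T.card := by
        rw [Finset.card_powerset]; push_cast; ring
      simp only [Finset.sum_add_distrib, Finset.sum_sub_distrib, Finset.sum_const,
        nsmul_eq_mul, ← Finset.sum_div, card_pow] at HJ
      ring_nf at HJ iha ihb ⊢
      linarith

set_option maxHeartbeats 1000000

theorem stmt_4 (d : ℕ) (ψ : ℝ → ℝ) (hψ0 : ψ 0 = 0)
    (h1 : NAlternating 1 ψ) (h2 : NAlternating 2 ψ) (h3 : NAlternating 3 ψ)
    (R : Fin d → ℝ) (hR : ∀ i, 0 < R i)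
    (v : Finset (Fin d) → EuclideanSpace ℝ (Fin d))
    (hv : ∀ (A : Finset (Fin d)) (i : Fin d), v A i = if i ∈ A then R i else -R i)
    (C₀ : EuclideanSpace ℝ (Fin d) → EuclideanSpace ℝ (Fin d) → ℝ)
    (hsym : ∀ x y, C₀ x y = C₀ y x)
    (h0 : ∀ x, C₀ x 0 = 0)
    (hvario : ∀ x y, C₀ x x - 2 * C₀ x y + C₀ y y = ψ (‖x - y‖ ^ 2))
    (C : EuclideanSpace ℝ (Fin d) → EuclideanSpace ℝ (Fin d) → ℝ)
    (hC : ∀ x y, C x y = C₀ x y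
      - (1 / 2 ^ d : ℝ) * ∑ A : Finset (Fin d), (C₀ x (v A) + C₀ y (v A))
      + (1 / 2 ^ (2 * d) : ℝ) *
          ∑ A : Finset (Fin d), ∑ B : Finset (Fin d), C₀ (v A) (v B)) :
    ∀ x : EuclideanSpace ℝ (Fin d), (∀ i, |x i| ≤ R i) →
      C x x ≤ ψ (∑ i, R i ^ 2) := by
  intro x hx
  classical
  have mono := mono_of_alt ψ h1
  have conc := conc_of_alt ψ h2
  have J2 := J2_of_alt ψ mono conc
  -- norms in Euclidean space
  have hnorm : ∀ z : EuclideanSpace ℝ (Fin d), ‖z‖ ^ 2 = ∑ i, (z i) ^ 2 := by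
    intro z
    rw [EuclideanSpace.norm_eq, Real.sq_sqrt (Finset.sum_nonneg fun i _ => sq_nonneg _)]
    simp [Real.norm_eq_abs, sq_abs]
  set Q : ℝ := ∑ i, R i ^ 2 with hQdef
  -- basic covariance identities
  have hC00 : C₀ 0 0 = 0 := h0 0
  have hzz : ∀ z, C₀ z z = ψ (‖z‖ ^ 2) := by
    intro z
    have h := hvario z 0
    rw [sub_zero, h0 z, hC00] at h
    linarith
  have hpair : ∀ z y, 2 * C₀ z y = ψ (‖z‖ ^ 2) + ψ (‖y‖ ^ 2) - ψ (‖z - y‖ ^ 2) := by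
    intro z y
    have h := hvario z y
    rw [hzz z, hzz y] at h
    linarith
  -- vertices
  have hvQ : ∀ A : Finset (Fin d), ‖v A‖ ^ 2 = Q := by
    intro A
    rw [hnorm, hQdef]
    refine Finset.sum_congr rfl fun i _ => ?_
    rw [hv A i]
    split_ifs <;> ring
  have hvv : ∀ A B : Finset (Fin d), ‖v A - v B‖ ^ 2 = ∑ i ∈ A ∆ B, 4 * R i ^ 2 := by
    intro A B
    rw [hnorm]
    have e1 : ∀ i : Fin d, ((v A - v B) i) ^ 2 = if i ∈ A ∆ B then 4 * R i ^ 2 else 0 := by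
      intro i
      have hab : (v A - v B) i = v A i - v B i := by simp
      rw [hab, hv A i, hv B i]
      by_cases hA : i ∈ A <;> by_cases hB : i ∈ B <;>
        simp [Finset.mem_symmDiff, hA, hB] <;> ring
    rw [Finset.sum_congr rfl fun i _ => e1 i, Finset.sum_ite_mem, Finset.univ_inter]
  set S3 : ℝ := ∑ C : Finset (Fin d), ψ (∑ i ∈ C, 4 * R i ^ 2) with hS3def
  have hinner : ∀ A : Finset (Fin d), ∑ B : Finset (Fin d), ψ (‖v A - v B‖ ^ 2) = S3 := by
    intro A
    have hbij : Function.Bijective (fun C : Finset (Fin d) => A ∆ C) :=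
      (Function.Involutive.bijective (fun C => by simp [symmDiff_symmDiff_cancel_left]))
    rw [← Function.Bijective.sum_comp hbij (fun B => ψ (‖v A - v B‖ ^ 2)), hS3def]
    refine Finset.sum_congr rfl fun Cs _ => ?_
    rw [hvv, symmDiff_symmDiff_cancel_left]
  -- the inner double sum
  have card2d : ((Finset.univ : Finset (Finset (Fin d))).card : ℝ) = 2 ^ d := by
    rw [Finset.card_univ, Fintype.card_finset, Fintype.card_fin]
    push_cast; ring
  have hinner2 : ∀ A : Finset (Fin d), ∑ B : Finset (Fin d), C₀ (v A) (v B)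
      = 2 ^ d * ψ Q - S3 / 2 := by
    intro A
    have e : ∀ B : Finset (Fin d), C₀ (v A) (v B) = ψ Q - ψ (‖v A - v B‖ ^ 2) / 2 := by
      intro B
      have h := hpair (v A) (v B)
      rw [hvQ A, hvQ B] at h
      linarith
    rw [Finset.sum_congr rfl fun B _ => e B, Finset.sum_sub_distrib, Finset.sum_const,
      nsmul_eq_mul, ← Finset.sum_div, hinner A, card2d]
  have hdouble : ∑ A : Finset (Fin d), ∑ B : Finset (Fin d), C₀ (v A) (v B)
      = 2 ^ d * (2 ^ d * ψ Q - S3 / 2) := by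
    rw [Finset.sum_congr rfl fun A _ => hinner2 A, Finset.sum_const, nsmul_eq_mul, card2d]
  set S1 : ℝ := ∑ A : Finset (Fin d), ψ (‖x - v A‖ ^ 2) with hS1def
  have hmiddle : ∑ A : Finset (Fin d), (C₀ x (v A) + C₀ x (v A))
      = 2 ^ d * (ψ (‖x‖ ^ 2) + ψ Q) - S1 := by
    have e : ∀ A : Finset (Fin d), C₀ x (v A) + C₀ x (v A)
        = ψ (‖x‖ ^ 2) + ψ Q - ψ (‖x - v A‖ ^ 2) := by
      intro A
      have h := hpair x (v A)
      rw [hvQ A] at h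
      linarith
    rw [Finset.sum_congr rfl fun A _ => e A, Finset.sum_sub_distrib, Finset.sum_const,
      nsmul_eq_mul, card2d, hS1def]
  have h2d : (0 : ℝ) < 2 ^ d := by positivity
  have h2d2 : (2 : ℝ) ^ (2 * d) = 2 ^ d * 2 ^ d := by
    rw [two_mul, pow_add]
  have hCxx : C x x = S1 / 2 ^ d - S3 / (2 ^ d * 2) := by
    rw [hC x x, hzz x, hmiddle, hdouble, h2d2]
    field_simp
    ring
  -- apply the key inequality
  have habs : ∀ i, -R i ≤ x i ∧ x i ≤ R i := fun i => abs_le.mp (hx i)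
  have hcond : ∀ i ∈ (Finset.univ : Finset (Fin d)),
      0 ≤ (x i - R i) ^ 2 ∧ 0 ≤ (x i + R i) ^ 2 ∧
      2 * R i ^ 2 ≤ (x i - R i) ^ 2 + (x i + R i) ^ 2 ∧
      (x i - R i) ^ 2 + (x i + R i) ^ 2
        + 2 * min ((x i - R i) ^ 2) ((x i + R i) ^ 2) ≤ 4 * R i ^ 2 := by
    intro i _
    obtain ⟨hxl, hxr⟩ := habs i
    have hRi := hR i
    refine ⟨sq_nonneg _, sq_nonneg _, by nlinarith [sq_nonneg (x i)], ?_⟩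
    rcases le_total ((x i - R i) ^ 2) ((x i + R i) ^ 2) with hle | hle
    · rw [min_eq_left hle]
      have hxR : 0 ≤ x i * R i := by nlinarith
      have hx0 : 0 ≤ x i := by
        by_contra hneg
        push_neg at hneg
        have := mul_neg_of_neg_of_pos hneg hRi
        linarith
      nlinarith [mul_nonneg hx0 (sub_nonneg.mpr hxr)]
    · rw [min_eq_right hle]
      have hxR : x i * R i ≤ 0 := by nlinarith
      have hx0 : x i ≤ 0 := by
        by_contra hneg
        push_neg at hneg
        have := mul_pos hneg hRi
        linarith
      nlinarith [mul_nonneg (neg_nonneg.mpr hx0) (sub_nonneg.mpr (neg_le.mp hxl))]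
  have hkey := key_ineq ψ J2 (fun i => (x i - R i) ^ 2) (fun i => (x i + R i) ^ 2)
    (fun i => R i ^ 2) Finset.univ hcond 0 le_rfl
  rw [Finset.powerset_univ] at hkey
  simp only [zero_add, hψ0, Finset.card_univ, Fintype.card_fin] at hkey
  -- identify the sums in hkey with S1, S3
  have hxv : ∀ A : Finset (Fin d),
      (∑ i ∈ A, (x i - R i) ^ 2 + ∑ i ∈ Finset.univ \ A, (x i + R i) ^ 2)
        = ‖x - v A‖ ^ 2 := by
    intro A
    have esum : ∀ i : Fin d, ((x - v A) i) ^ 2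
        = if i ∈ A then (x i - R i) ^ 2 else (x i + R i) ^ 2 := by
      intro i
      have hab : (x - v A) i = x i - v A i := by simp
      rw [hab, hv A i]
      split_ifs <;> ring
    have e2 : ‖x - v A‖ ^ 2
        = ∑ i, (if i ∈ A then (x i - R i) ^ 2 else (x i + R i) ^ 2) := by
      rw [hnorm]; exact Finset.sum_congr rfl fun i _ => esum i
    have eA : ∑ i ∈ A, (if i ∈ A then (x i - R i) ^ 2 else (x i + R i) ^ 2)
        = ∑ i ∈ A, (x i - R i) ^ 2 :=
      Finset.sum_congr rfl fun i hi => if_pos hi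
    have eB : ∑ i ∈ Finset.univ \ A, (if i ∈ A then (x i - R i) ^ 2 else (x i + R i) ^ 2)
        = ∑ i ∈ Finset.univ \ A, (x i + R i) ^ 2 :=
      Finset.sum_congr rfl fun i hi => if_neg (Finset.mem_sdiff.mp hi).2
    rw [e2, ← Finset.sum_sdiff (Finset.subset_univ A), eA, eB]
    exact add_comm _ _
  rw [Finset.sum_congr rfl fun A (_ : A ∈ Finset.univ) => by rw [hxv A]] at hkey
  rw [← hS1def, ← hS3def] at hkey
  -- conclude
  rw [hCxx]
  have step : S1 / 2 ^ d ≤ (2 ^ d * ψ (∑ i, R i ^ 2) - 2 ^ d / 2 * 0 + S3 / 2) / 2 ^ d := by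
    gcongr
  have expand : (2 ^ d * ψ (∑ i, R i ^ 2) - 2 ^ d / 2 * 0 + S3 / 2) / 2 ^ d
      = ψ (∑ i, R i ^ 2) + S3 / (2 ^ d * 2) := by
    field_simp
    ring
  rw [expand] at step
  linarith
end

section
/- Let ψ : [0,∞) → ℝ satisfy ψ(0) = 0 and be 1-, 2- and 3-alternating. Let R₁,…,R_d > 0 and let x = (x₁,…,x_d) ∈ ℝ^d with |xᵢ| ≤ Rᵢ for all i. Then 2^{−d} Σ_{A ⊆ {1,…,d}} [ ψ( Σ_{i∈A} (xᵢ − Rᵢ)² + Σ_{j∉A} (xⱼ + Rⱼ)² ) − (1/2) ψ( 4 Σ_{i∈A} Rᵢ² ) ] ≤ ψ(R₁² + ⋯ + R_d²). -/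
lemma NAlternating.psi_mono {ψ : ℝ → ℝ} (h1 : NAlternating 1 ψ) :
    ∀ a b : ℝ, 0 ≤ a → a ≤ b → ψ a ≤ ψ b := by
  intro a b ha hab
  have := h1 a ha ![b - a] (by intro i; fin_cases i; simpa using by linarith)
  rw [show (Finset.univ : Finset (Finset (Fin 1))) = {∅, {0}} from by decide,
    Finset.sum_insert (by decide), Finset.sum_singleton] at this
  norm_num at this
  linarith

lemma NAlternating.psi_conc {ψ : ℝ → ℝ} (h2 : NAlternating 2 ψ) :
    ∀ s t₁ t₂ : ℝ, 0 ≤ s → 0 ≤ t₁ → 0 ≤ t₂ →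
      ψ s + ψ (s + (t₁ + t₂)) ≤ ψ (s + t₁) + ψ (s + t₂) := by
  intro s t₁ t₂ hs ht₁ ht₂
  have := h2 s hs ![t₁, t₂] (by intro i; fin_cases i <;> simpa)
  rw [show (Finset.univ : Finset (Finset (Fin 2))) = {∅, {0}, {1}, {0, 1}} from by decide] at this
  simp +decide [Finset.sum_insert, Finset.card_insert_of_notMem] at this
  linarith

lemma NAlternating.psi_three {ψ : ℝ → ℝ} (h3 : NAlternating 3 ψ) :
    ∀ b ρ : ℝ, 0 ≤ b → 0 ≤ ρ →
      ψ b + 2 * ψ (b + 3 * ρ) ≤ 2 * ψ (b + ρ) + ψ (b + 4 * ρ) := by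
  intro b ρ hb hρ
  have := h3 b hb ![ρ, ρ, 2 * ρ] (by intro i; fin_cases i <;> simp <;> linarith)
  rw [show (Finset.univ : Finset (Finset (Fin 3))) =
      {∅, {0}, {1}, {2}, {0, 1}, {0, 2}, {1, 2}, {0, 1, 2}} from by decide] at this
  simp +decide [Finset.sum_insert, Finset.card_insert_of_notMem] at this
  have e1 : b + (ρ + ρ) = b + 2 * ρ := by ring
  have e2 : b + (ρ + 2 * ρ) = b + 3 * ρ := by ring
  have e3 : b + (ρ + (ρ + 2 * ρ)) = b + 4 * ρ := by ring
  rw [e1, e2, e3] at this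
  linarith

/-- Key lemma from 2- and 3-alternation:
`2[ψ(s+2ρ) − ψ(s)] ≤ ψ(b+4ρ) − ψ(b)` whenever `b + ρ ≤ s`. -/
lemma psi_lemK {ψ : ℝ → ℝ}
    (conc : ∀ s t₁ t₂ : ℝ, 0 ≤ s → 0 ≤ t₁ → 0 ≤ t₂ →
      ψ s + ψ (s + (t₁ + t₂)) ≤ ψ (s + t₁) + ψ (s + t₂))
    (three : ∀ b ρ : ℝ, 0 ≤ b → 0 ≤ ρ →
      ψ b + 2 * ψ (b + 3 * ρ) ≤ 2 * ψ (b + ρ) + ψ (b + 4 * ρ)) :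
    ∀ b ρ s : ℝ, 0 ≤ b → 0 ≤ ρ → b + ρ ≤ s →
    2 * ψ (s + 2 * ρ) - 2 * ψ s ≤ ψ (b + 4 * ρ) - ψ b := by
  intro b ρ s hb hρ hbs
  have h1 := conc (b + ρ) (2 * ρ) (s - (b + ρ)) (by linarith) (by linarith) (by linarith)
  have e1 : b + ρ + (2 * ρ + (s - (b + ρ))) = s + 2 * ρ := by ring
  have e2 : b + ρ + 2 * ρ = b + 3 * ρ := by ring
  have e3 : b + ρ + (s - (b + ρ)) = s := by ring
  rw [e1, e2, e3] at h1
  have h2 := three b ρ hb hρ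
  linarith

/-- The complement-pairing inequality. -/
lemma psi_pairP {ψ : ℝ → ℝ} (hψ0 : ψ 0 = 0)
    (conc : ∀ s t₁ t₂ : ℝ, 0 ≤ s → 0 ≤ t₁ → 0 ≤ t₂ →
      ψ s + ψ (s + (t₁ + t₂)) ≤ ψ (s + t₁) + ψ (s + t₂))
    (three : ∀ b ρ : ℝ, 0 ≤ b → 0 ≤ ρ →
      ψ b + 2 * ψ (b + 3 * ρ) ≤ 2 * ψ (b + ρ) + ψ (b + 4 * ρ)) :
    ∀ σ σ' : ℝ, 0 ≤ σ → 0 ≤ σ' →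
    ψ (σ + σ' + 2 * σ) + ψ (σ + σ' + 2 * σ') - (1/2) * ψ (4 * σ) - (1/2) * ψ (4 * σ')
      ≤ 2 * ψ (σ + σ') := by
  have core : ∀ σ σ' : ℝ, 0 ≤ σ → σ ≤ σ' →
      ψ (σ + σ' + 2 * σ) + ψ (σ + σ' + 2 * σ') - (1/2) * ψ (4 * σ) - (1/2) * ψ (4 * σ')
        ≤ 2 * ψ (σ + σ') := by
    intro σ σ' hσ hle
    have K1 := psi_lemK conc three (4 * σ) (σ' - σ) (σ + σ' + 2 * σ)
      (by linarith) (by linarith) (by linarith)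
    have e1 : σ + σ' + 2 * σ + 2 * (σ' - σ) = σ + σ' + 2 * σ' := by ring
    have e2 : 4 * σ + 4 * (σ' - σ) = 4 * σ' := by ring
    rw [e1, e2] at K1
    have K2 := psi_lemK conc three 0 σ (σ + σ') le_rfl hσ (by linarith)
    rw [zero_add, hψ0] at K2
    linarith
  intro σ σ' hσ hσ'
  rcases le_total σ σ' with h | h
  · exact core σ σ' hσ h
  · have := core σ' σ hσ' h
    rw [show σ' + σ = σ + σ' from by ring] at this
    linarith

/-- Two-point rearrangement lemma (from monotonicity and 2-alternation). -/
lemma psi_lemJ {ψ : ℝ → ℝ}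
    (mono : ∀ a b : ℝ, 0 ≤ a → a ≤ b → ψ a ≤ ψ b)
    (conc : ∀ s t₁ t₂ : ℝ, 0 ≤ s → 0 ≤ t₁ → 0 ≤ t₂ →
      ψ s + ψ (s + (t₁ + t₂)) ≤ ψ (s + t₁) + ψ (s + t₂)) :
    ∀ c u v m T : ℝ, 0 ≤ c → 0 ≤ u → u ≤ m → m ≤ v → u + v ≤ m + T →
    ψ (c + u) + ψ (c + v) ≤ ψ (c + m) + ψ (c + T) := by
  intro c u v m T hc hu hum hmv hT
  have h1 := conc (c + u) (m - u) (v - m) (by linarith) (by linarith) (by linarith)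
  have e1 : c + u + (m - u + (v - m)) = c + v := by ring
  have e2 : c + u + (m - u) = c + m := by ring
  have e3 : c + u + (v - m) = c + (u + v - m) := by ring
  rw [e1, e2, e3] at h1
  have h2 : ψ (c + (u + v - m)) ≤ ψ (c + T) := mono _ _ (by linarith) (by linarith)
  linarith

/-- Coordinatewise replacement over the powerset. -/
lemma psi_sumI {ψ : ℝ → ℝ} {ι : Type*} [DecidableEq ι] (f g f' g' : ι → ℝ)
    (hf : ∀ i, 0 ≤ f i) (hg : ∀ i, 0 ≤ g i) (hf' : ∀ i, 0 ≤ f' i) (hg' : ∀ i, 0 ≤ g' i) :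
    ∀ s : Finset ι,
      (∀ i ∈ s, ∀ c : ℝ, 0 ≤ c →
        ψ (c + f i) + ψ (c + g i) ≤ ψ (c + f' i) + ψ (c + g' i)) →
      ∀ base : ℝ, 0 ≤ base →
      ∑ A ∈ s.powerset, ψ (base + ((∑ i ∈ A, f i) + ∑ i ∈ s \ A, g i))
        ≤ ∑ A ∈ s.powerset, ψ (base + ((∑ i ∈ A, f' i) + ∑ i ∈ s \ A, g' i)) := by
  intro s
  induction s using Finset.induction_on with
  | empty => intro _ base hb; simp
  | @insert a s ha ih =>
    intro H base hbase
    have haS : ∀ A : Finset ι, A ⊆ s → a ∉ s \ A := fun A _ h => ha (Finset.mem_sdiff.mp h).1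
    have e2 : ∀ A : Finset ι, A ⊆ s → insert a s \ insert a A = s \ A := by
      intro A hA
      ext y
      simp only [Finset.mem_sdiff, Finset.mem_insert, not_or]
      constructor
      · rintro ⟨h1 | h1, h2, h3⟩
        · exact absurd h1 h2
        · exact ⟨h1, h3⟩
      · rintro ⟨h1, h3⟩
        exact ⟨Or.inr h1, fun e => ha (e ▸ h1), h3⟩
    have e1 : ∀ A : Finset ι, A ⊆ s → insert a s \ A = insert a (s \ A) := by
      intro A hA
      ext y
      simp only [Finset.mem_sdiff, Finset.mem_insert, not_or]
      constructor
      · rintro ⟨h1 | h1, h2⟩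
        · exact Or.inl h1
        · exact Or.inr ⟨h1, h2⟩
      · rintro (h1 | ⟨h1, h2⟩)
        · exact ⟨Or.inl h1, fun hy => (ha (h1 ▸ (hA hy))).elim⟩
        · exact ⟨Or.inr h1, h2⟩
    rw [Finset.sum_powerset_insert ha, Finset.sum_powerset_insert ha]
    have L : ∀ (u v : ι → ℝ),
        (∑ A ∈ s.powerset, ψ (base + ((∑ i ∈ A, u i) + ∑ i ∈ insert a s \ A, v i)))
        = ∑ A ∈ s.powerset, ψ ((base + v a) + ((∑ i ∈ A, u i) + ∑ i ∈ s \ A, v i)) := by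
      intro u v
      refine Finset.sum_congr rfl fun A hA => ?_
      have hAs := Finset.mem_powerset.mp hA
      rw [e1 A hAs, Finset.sum_insert (haS A hAs)]
      congr 1; ring
    have L2 : ∀ (u v : ι → ℝ),
        (∑ A ∈ s.powerset, ψ (base + ((∑ i ∈ insert a A, u i) + ∑ i ∈ insert a s \ insert a A, v i)))
        = ∑ A ∈ s.powerset, ψ ((base + u a) + ((∑ i ∈ A, u i) + ∑ i ∈ s \ A, v i)) := by
      intro u v
      refine Finset.sum_congr rfl fun A hA => ?_
      have hAs := Finset.mem_powerset.mp hA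
      have haA : a ∉ A := fun h => ha (hAs h)
      rw [e2 A hAs, Finset.sum_insert haA]
      congr 1; ring
    rw [L f g, L2 f g, L f' g', L2 f' g']
    have Hs : ∀ i ∈ s, ∀ c : ℝ, 0 ≤ c →
        ψ (c + f i) + ψ (c + g i) ≤ ψ (c + f' i) + ψ (c + g' i) :=
      fun i hi => H i (Finset.mem_insert_of_mem hi)
    have ih1 := ih Hs (base + g a) (by have := hg a; linarith)
    have ih2 := ih Hs (base + f a) (by have := hf a; linarith)
    have step : ∑ A ∈ s.powerset, ψ ((base + g a) + ((∑ i ∈ A, f' i) + ∑ i ∈ s \ A, g' i))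
          + ∑ A ∈ s.powerset, ψ ((base + f a) + ((∑ i ∈ A, f' i) + ∑ i ∈ s \ A, g' i))
        ≤ ∑ A ∈ s.powerset, ψ ((base + g' a) + ((∑ i ∈ A, f' i) + ∑ i ∈ s \ A, g' i))
          + ∑ A ∈ s.powerset, ψ ((base + f' a) + ((∑ i ∈ A, f' i) + ∑ i ∈ s \ A, g' i)) := by
      rw [← Finset.sum_add_distrib, ← Finset.sum_add_distrib]
      refine Finset.sum_le_sum fun A hA => ?_
      set c' : ℝ := (∑ i ∈ A, f' i) + ∑ i ∈ s \ A, g' i with hc'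
      have hc'0 : 0 ≤ c' := by
        apply add_nonneg <;> exact Finset.sum_nonneg fun i _ => by
          first | exact hf' i | exact hg' i
      have h := H a (Finset.mem_insert_self a s) (base + c') (by linarith)
      have r1 : base + c' + f a = base + f a + c' := by ring
      have r2 : base + c' + g a = base + g a + c' := by ring
      have r3 : base + c' + f' a = base + f' a + c' := by ring
      have r4 : base + c' + g' a = base + g' a + c' := by ring
      rw [r1, r2, r3, r4] at h
      linarith
    linarith

theorem stmt_5 (d : ℕ) (ψ : ℝ → ℝ) (hψ0 : ψ 0 = 0)
    (h1 : NAlternating 1 ψ) (h2 : NAlternating 2 ψ) (h3 : NAlternating 3 ψ)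
    (R : Fin d → ℝ) (hR : ∀ i, 0 < R i)
    (x : Fin d → ℝ) (hx : ∀ i, |x i| ≤ R i) :
    (1 / 2 ^ d : ℝ) * ∑ A : Finset (Fin d),
        (ψ ((∑ i ∈ A, (x i - R i) ^ 2) + ∑ j ∈ Aᶜ, (x j + R j) ^ 2)
          - (1 / 2) * ψ (4 * ∑ i ∈ A, R i ^ 2))
      ≤ ψ (∑ i, R i ^ 2) := by
  classical
  have mono := h1.psi_mono
  have conc := h2.psi_conc
  have three := h3.psi_three
  have pairP := psi_pairP hψ0 conc three
  have lemJ := psi_lemJ mono conc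
  set S : ℝ := ∑ i, R i ^ 2 with hS
  have hσ0 : ∀ A : Finset (Fin d), (0:ℝ) ≤ ∑ i ∈ A, R i ^ 2 :=
    fun A => Finset.sum_nonneg fun i _ => sq_nonneg _
  have hcompl : ∀ A : Finset (Fin d), (∑ i ∈ A, R i ^ 2) + (∑ i ∈ Aᶜ, R i ^ 2) = S :=
    fun A => Finset.sum_add_sum_compl A _
  -- Step I
  have stepI : ∑ A : Finset (Fin d),
        ψ ((∑ i ∈ A, (x i - R i) ^ 2) + ∑ j ∈ Aᶜ, (x j + R j) ^ 2)
      ≤ ∑ A : Finset (Fin d), ψ (3 * S - 2 * ∑ i ∈ A, R i ^ 2) := by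
    have H : ∀ i ∈ (Finset.univ : Finset (Fin d)), ∀ c : ℝ, 0 ≤ c →
        ψ (c + (x i - R i) ^ 2) + ψ (c + (x i + R i) ^ 2)
          ≤ ψ (c + R i ^ 2) + ψ (c + 3 * R i ^ 2) := by
      intro i _ c hc
      have hxi := hx i
      have hRi := hR i
      have hx2 : x i ^ 2 ≤ R i ^ 2 := sq_le_sq' (by cases abs_le.mp hxi; linarith) (abs_le.mp hxi).2
      rcases le_total 0 (x i) with hxpos | hxneg
      · exact lemJ c ((x i - R i)^2) ((x i + R i)^2) (R i ^2) (3 * R i ^2) hc (sq_nonneg _)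
          (by nlinarith) (by nlinarith) (by nlinarith)
      · have := lemJ c ((x i + R i)^2) ((x i - R i)^2) (R i ^2) (3 * R i ^2) hc (sq_nonneg _)
          (by nlinarith) (by nlinarith) (by nlinarith)
        linarith
    have key := psi_sumI (fun i => (x i - R i)^2) (fun i => (x i + R i)^2)
      (fun i => R i ^ 2) (fun i => 3 * R i ^ 2)
      (fun i => sq_nonneg _) (fun i => sq_nonneg _) (fun i => sq_nonneg _)
      (fun i => by positivity) Finset.univ H 0 le_rfl
    rw [Finset.powerset_univ] at key
    have eL : ∀ A : Finset (Fin d),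
        ψ (0 + ((∑ i ∈ A, (x i - R i) ^ 2) + ∑ i ∈ Finset.univ \ A, (x i + R i) ^ 2))
        = ψ ((∑ i ∈ A, (x i - R i) ^ 2) + ∑ j ∈ Aᶜ, (x j + R j) ^ 2) := by
      intro A
      rw [← Finset.compl_eq_univ_sdiff, zero_add]
    have eR : ∀ A : Finset (Fin d),
        ψ (0 + ((∑ i ∈ A, R i ^ 2) + ∑ i ∈ Finset.univ \ A, 3 * R i ^ 2))
        = ψ (3 * S - 2 * ∑ i ∈ A, R i ^ 2) := by
      intro A
      congr 1
      rw [← Finset.compl_eq_univ_sdiff, ← Finset.mul_sum]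
      have := hcompl A
      linarith
    calc ∑ A : Finset (Fin d), ψ ((∑ i ∈ A, (x i - R i) ^ 2) + ∑ j ∈ Aᶜ, (x j + R j) ^ 2)
        = ∑ A : Finset (Fin d),
            ψ (0 + ((∑ i ∈ A, (x i - R i) ^ 2) + ∑ i ∈ Finset.univ \ A, (x i + R i) ^ 2)) :=
          (Finset.sum_congr rfl fun A _ => (eL A).symm)
      _ ≤ ∑ A : Finset (Fin d),
            ψ (0 + ((∑ i ∈ A, R i ^ 2) + ∑ i ∈ Finset.univ \ A, 3 * R i ^ 2)) := key
      _ = ∑ A : Finset (Fin d), ψ (3 * S - 2 * ∑ i ∈ A, R i ^ 2) :=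
          Finset.sum_congr rfl fun A _ => eR A
  -- Step II
  have stepII : ∑ A : Finset (Fin d),
      (ψ (3 * S - 2 * ∑ i ∈ A, R i ^ 2) - (1/2) * ψ (4 * ∑ i ∈ A, R i ^ 2))
      ≤ 2 ^ d * ψ S := by
    set g : Finset (Fin d) → ℝ := fun A =>
      ψ (3 * S - 2 * ∑ i ∈ A, R i ^ 2) - (1/2) * ψ (4 * ∑ i ∈ A, R i ^ 2) - ψ S with hg
    have hsum : ∑ A : Finset (Fin d), g Aᶜ = ∑ A : Finset (Fin d), g A :=
      Fintype.sum_bijective compl (Function.Involutive.bijective compl_compl) _ _ fun A => rfl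
    have hpair : ∀ A : Finset (Fin d), g A + g Aᶜ ≤ 0 := by
      intro A
      have hc := hcompl A
      have h := pairP (∑ i ∈ A, R i ^ 2) (∑ i ∈ Aᶜ, R i ^ 2) (hσ0 A) (hσ0 Aᶜ)
      have e1 : (∑ i ∈ A, R i ^ 2) + (∑ i ∈ Aᶜ, R i ^ 2) + 2 * ∑ i ∈ Aᶜ, R i ^ 2
          = 3 * S - 2 * ∑ i ∈ A, R i ^ 2 := by linarith
      have e2 : (∑ i ∈ A, R i ^ 2) + (∑ i ∈ Aᶜ, R i ^ 2) + 2 * ∑ i ∈ A, R i ^ 2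
          = 3 * S - 2 * ∑ i ∈ Aᶜ, R i ^ 2 := by
        have := hcompl Aᶜ
        rw [compl_compl] at this
        linarith
      rw [e1, e2, hc] at h
      simp only [hg]
      linarith
    have hg0 : ∑ A : Finset (Fin d), g A ≤ 0 := by
      have : (2:ℝ) * ∑ A : Finset (Fin d), g A = ∑ A : Finset (Fin d), (g A + g Aᶜ) := by
        rw [Finset.sum_add_distrib, hsum]; ring
      nlinarith [Finset.sum_nonpos (fun A (_ : A ∈ Finset.univ) => hpair A)]
    have hcard : ∑ _A : Finset (Fin d), ψ S = 2 ^ d * ψ S := by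
      rw [Finset.sum_const, Finset.card_univ, Fintype.card_finset, Fintype.card_fin,
        nsmul_eq_mul]
      push_cast
      ring
    have expand : ∑ A : Finset (Fin d),
        (ψ (3 * S - 2 * ∑ i ∈ A, R i ^ 2) - (1/2) * ψ (4 * ∑ i ∈ A, R i ^ 2))
        = (∑ A : Finset (Fin d), g A) + ∑ _A : Finset (Fin d), ψ S := by
      rw [← Finset.sum_add_distrib]
      exact Finset.sum_congr rfl fun A _ => by simp only [hg]; ring
    rw [expand, hcard]
    linarith
  -- assemble
  have total : ∑ A : Finset (Fin d),
      (ψ ((∑ i ∈ A, (x i - R i) ^ 2) + ∑ j ∈ Aᶜ, (x j + R j) ^ 2)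
        - (1/2) * ψ (4 * ∑ i ∈ A, R i ^ 2))
      ≤ 2 ^ d * ψ S := by
    have e : ∑ A : Finset (Fin d),
        (ψ ((∑ i ∈ A, (x i - R i) ^ 2) + ∑ j ∈ Aᶜ, (x j + R j) ^ 2)
          - (1/2) * ψ (4 * ∑ i ∈ A, R i ^ 2))
        = (∑ A : Finset (Fin d), ψ ((∑ i ∈ A, (x i - R i) ^ 2) + ∑ j ∈ Aᶜ, (x j + R j) ^ 2))
          - ∑ A : Finset (Fin d), (1/2) * ψ (4 * ∑ i ∈ A, R i ^ 2) := by
      rw [Finset.sum_sub_distrib]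
    have e2 : ∑ A : Finset (Fin d),
        (ψ (3 * S - 2 * ∑ i ∈ A, R i ^ 2) - (1/2) * ψ (4 * ∑ i ∈ A, R i ^ 2))
        = (∑ A : Finset (Fin d), ψ (3 * S - 2 * ∑ i ∈ A, R i ^ 2))
          - ∑ A : Finset (Fin d), (1/2) * ψ (4 * ∑ i ∈ A, R i ^ 2) := by
      rw [Finset.sum_sub_distrib]
    rw [e]
    rw [e2] at stepII
    linarith
  calc (1 / 2 ^ d : ℝ) * ∑ A : Finset (Fin d),
        (ψ ((∑ i ∈ A, (x i - R i) ^ 2) + ∑ j ∈ Aᶜ, (x j + R j) ^ 2)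
          - (1/2) * ψ (4 * ∑ i ∈ A, R i ^ 2))
      ≤ (1 / 2 ^ d : ℝ) * (2 ^ d * ψ S) := by
        apply mul_le_mul_of_nonneg_left total (by positivity)
    _ = ψ S := by field_simp
end

section
/- Let ψ : [0,∞) → ℝ be 1- and 2-alternating. Then for all a ≥ 0 and all real numbers x, R with 0 ≤ x ≤ R one has ψ(a + (R − x)²) + ψ(a + (R + x)²) ≤ ψ(a + R²) + ψ(a + 3R²). -/
lemma alt1_mono (f : ℝ → ℝ) (h : NAlternating 1 f) {s t : ℝ} (hs : 0 ≤ s) (ht : 0 ≤ t) :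
    f s ≤ f (s + t) := by
  have := h s hs (fun _ => t) (fun _ => ht)
  have huniv : (Finset.univ : Finset (Finset (Fin 1))) = {∅, {0}} := by decide
  rw [huniv, Finset.sum_insert (by decide), Finset.sum_singleton] at this
  simp at this
  linarith

lemma alt2_ineq (f : ℝ → ℝ) (h : NAlternating 2 f) {s t0 t1 : ℝ}
    (hs : 0 ≤ s) (ht0 : 0 ≤ t0) (ht1 : 0 ≤ t1) :
    f s + f (s + t0 + t1) ≤ f (s + t0) + f (s + t1) := by
  have := h s hs ![t0, t1] (by intro i; fin_cases i <;> simpa)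
  have huniv : (Finset.univ : Finset (Finset (Fin 2))) = {∅, {0}, {1}, {0, 1}} := by decide
  rw [huniv, Finset.sum_insert (by decide), Finset.sum_insert (by decide),
    Finset.sum_insert (by decide), Finset.sum_singleton] at this
  simp [Fin.sum_univ_two, Finset.sum_insert (by decide : (0:Fin 2) ∉ ({1} : Finset (Fin 2)))] at this
  rw [show s + (t0 + t1) = s + t0 + t1 from by ring] at this
  linarith

theorem stmt_10 (ψ : ℝ → ℝ) (h1 : NAlternating 1 ψ) (h2 : NAlternating 2 ψ)
    (a x R : ℝ) (ha : 0 ≤ a) (hx0 : 0 ≤ x) (hxR : x ≤ R) :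
    ψ (a + (R - x) ^ 2) + ψ (a + (R + x) ^ 2) ≤ ψ (a + R ^ 2) + ψ (a + 3 * R ^ 2) := by
  have hRx : 0 ≤ R - x := by linarith
  have hsq : (0:ℝ) ≤ (R - x)^2 := sq_nonneg _
  have hs : 0 ≤ a + (R - x)^2 := by linarith
  have ht0 : 0 ≤ R^2 - (R - x)^2 := by nlinarith
  have ht1 : 0 ≤ (R + x)^2 - R^2 := by nlinarith
  have key := alt2_ineq ψ h2 hs ht0 ht1
  have e1 : a + (R - x)^2 + (R^2 - (R - x)^2) = a + R^2 := by ring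
  have e2 : a + (R - x)^2 + (R^2 - (R - x)^2) + ((R + x)^2 - R^2) = a + (R + x)^2 := by ring
  have e3 : a + (R - x)^2 + ((R + x)^2 - R^2) = a + R^2 + 2 * x^2 := by ring
  rw [e1, show a + R^2 + ((R + x)^2 - R^2) = a + (R + x)^2 from by ring, e3] at key
  have hmono : ψ (a + R^2 + 2 * x^2) ≤ ψ (a + 3 * R^2) := by
    have h0 : 0 ≤ a + R^2 + 2 * x^2 := by nlinarith
    have := alt1_mono ψ h1 h0 (show (0:ℝ) ≤ 2 * R^2 - 2 * x^2 by nlinarith)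
    rwa [show a + R^2 + 2 * x^2 + (2 * R^2 - 2 * x^2) = a + 3 * R^2 from by ring] at this
  linarith
end

section
/- Let ψ : [0,∞) → ℝ be 1- and 2-alternating, let d ≥ 1, a ≥ 0, and let x₁,…,x_d, R₁,…,R_d be real numbers with 0 ≤ xᵢ ≤ Rᵢ for i = 1,…,d. Then Σ_{A ⊆ {1,…,d}} ψ( a + Σ_{i∈A} (xᵢ − Rᵢ)² + Σ_{j∈Aᶜ} (xⱼ + Rⱼ)² ) ≤ Σ_{A ⊆ {1,…,d}} ψ( a + 3 Σ_{i∈A} Rᵢ² + Σ_{j∈Aᶜ} Rⱼ² ), where Aᶜ = {1,…,d} \ A. -/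
lemma nalt_mono (ψ : ℝ → ℝ) (h1 : NAlternating 1 ψ) :
    ∀ s, 0 ≤ s → ∀ t, 0 ≤ t → ψ s ≤ ψ (s + t) := by
  intro s hs t ht
  have := h1 s hs ![t] (by intro i; fin_cases i <;> simpa)
  have huniv : (Finset.univ : Finset (Finset (Fin 1))) = {∅, {0}} := by decide
  rw [huniv, Finset.sum_insert (by decide), Finset.sum_singleton] at this
  simp at this
  linarith

lemma nalt_submod (ψ : ℝ → ℝ) (h2 : NAlternating 2 ψ) :
    ∀ s, 0 ≤ s → ∀ t₁, 0 ≤ t₁ → ∀ t₂, 0 ≤ t₂ →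
      ψ s + ψ (s + t₁ + t₂) ≤ ψ (s + t₁) + ψ (s + t₂) := by
  intro s hs t₁ ht₁ t₂ ht₂
  have := h2 s hs ![t₁, t₂] (by intro i; fin_cases i <;> simpa)
  have huniv : (Finset.univ : Finset (Finset (Fin 2))) = {∅, {0}, {1}, {0, 1}} := by decide
  rw [huniv] at this
  rw [Finset.sum_insert (by decide), Finset.sum_insert (by decide),
    Finset.sum_insert (by decide), Finset.sum_singleton] at this
  simp [Finset.sum_insert, Finset.sum_singleton] at this
  have harg : s + (t₁ + t₂) = s + t₁ + t₂ := by ring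
  rw [harg] at this
  linarith

lemma pair_ineq (ψ : ℝ → ℝ) (h1 : NAlternating 1 ψ) (h2 : NAlternating 2 ψ)
    (x R b : ℝ) (hx : 0 ≤ x) (hxR : x ≤ R) (hb : 0 ≤ b) :
    ψ (b + (x - R) ^ 2) + ψ (b + (x + R) ^ 2) ≤ ψ (b + 3 * R ^ 2) + ψ (b + R ^ 2) := by
  have mono := nalt_mono ψ h1
  have submod := nalt_submod ψ h2
  rcases le_or_gt ((x + R) ^ 2) (3 * R ^ 2) with hc | hc
  · have e1 : ψ (b + (x - R) ^ 2) ≤ ψ (b + R ^ 2) := by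
      have := mono (b + (x - R) ^ 2) (by positivity) (R ^ 2 - (x - R) ^ 2) (by nlinarith)
      have harg : b + (x - R) ^ 2 + (R ^ 2 - (x - R) ^ 2) = b + R ^ 2 := by ring
      rwa [harg] at this
    have e2 : ψ (b + (x + R) ^ 2) ≤ ψ (b + 3 * R ^ 2) := by
      have := mono (b + (x + R) ^ 2) (by positivity) (3 * R ^ 2 - (x + R) ^ 2) (by linarith)
      have harg : b + (x + R) ^ 2 + (3 * R ^ 2 - (x + R) ^ 2) = b + 3 * R ^ 2 := by ring
      rwa [harg] at this
    linarith
  · -- (x+R)^2 > 3R^2; use submodularity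
    have hR : 0 ≤ R := le_trans hx hxR
    have h2x : R ^ 2 ≤ 2 * x ^ 2 := by nlinarith
    have hsub := submod (b + (x - R) ^ 2) (by positivity)
      (3 * R ^ 2 - (x - R) ^ 2) (by nlinarith)
      ((x + R) ^ 2 - 3 * R ^ 2) (by linarith)
    have e1 : b + (x - R) ^ 2 + (3 * R ^ 2 - (x - R) ^ 2) = b + 3 * R ^ 2 := by ring
    have e2 : b + (x - R) ^ 2 + (3 * R ^ 2 - (x - R) ^ 2) + ((x + R) ^ 2 - 3 * R ^ 2)
        = b + (x + R) ^ 2 := by ring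
    have e3 : b + (x - R) ^ 2 + ((x + R) ^ 2 - 3 * R ^ 2) = b + (2 * x ^ 2 - R ^ 2) := by ring
    rw [e2, e1, e3] at hsub
    have emono : ψ (b + (2 * x ^ 2 - R ^ 2)) ≤ ψ (b + R ^ 2) := by
      have := mono (b + (2 * x ^ 2 - R ^ 2)) (by nlinarith)
        (R ^ 2 - (2 * x ^ 2 - R ^ 2)) (by nlinarith)
      have harg : b + (2 * x ^ 2 - R ^ 2) + (R ^ 2 - (2 * x ^ 2 - R ^ 2)) = b + R ^ 2 := by ring
      rwa [harg] at this
    linarith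

lemma key_lemma (ψ : ℝ → ℝ) {d : ℕ} (u v u' v' : Fin d → ℝ) (a : ℝ) (ha : 0 ≤ a)
    (hu : ∀ i, 0 ≤ u i) (hv : ∀ i, 0 ≤ v i) (hu' : ∀ i, 0 ≤ u' i) (hv' : ∀ i, 0 ≤ v' i)
    (hpair : ∀ i b, 0 ≤ b → ψ (b + u i) + ψ (b + v i) ≤ ψ (b + u' i) + ψ (b + v' i)) :
    ∑ A : Finset (Fin d), ψ (a + ∑ i ∈ A, u i + ∑ j ∈ Aᶜ, v j)
      ≤ ∑ A : Finset (Fin d), ψ (a + ∑ i ∈ A, u' i + ∑ j ∈ Aᶜ, v' j) := by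
  classical
  set w : Finset (Fin d) → Fin d → ℝ := fun T i => if i ∈ T then u' i else u i with hw
  set z : Finset (Fin d) → Fin d → ℝ := fun T i => if i ∈ T then v' i else v i with hz
  set F : Finset (Fin d) → ℝ := fun T =>
    ∑ A : Finset (Fin d), ψ (a + ∑ i ∈ A, w T i + ∑ j ∈ Aᶜ, z T j) with hF
  have hwnn : ∀ T i, 0 ≤ w T i := by
    intro T i; simp only [hw]; split <;> [exact hu' i; exact hu i]
  have hznn : ∀ T i, 0 ≤ z T i := by
    intro T i; simp only [hz]; split <;> [exact hv' i; exact hv i]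
  have step : ∀ (T : Finset (Fin d)) (j : Fin d), j ∉ T → F T ≤ F (insert j T) := by
    intro T j hj
    have huniv : (Finset.univ : Finset (Fin d)) = insert j (Finset.univ.erase j) :=
      (Finset.insert_erase (Finset.mem_univ j)).symm
    have expand : ∀ T' : Finset (Fin d), F T' =
        ∑ A ∈ (Finset.univ.erase j).powerset,
          (ψ (a + ∑ i ∈ A, w T' i + ∑ k ∈ Aᶜ, z T' k)
            + ψ (a + ∑ i ∈ insert j A, w T' i + ∑ k ∈ (insert j A)ᶜ, z T' k)) := by
      intro T'
      simp only [hF]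
      rw [← Finset.powerset_univ, huniv,
        Finset.sum_powerset_insert (Finset.notMem_erase j Finset.univ), ← Finset.sum_add_distrib,
        Finset.erase_insert (Finset.notMem_erase j Finset.univ)]
    rw [expand T, expand (insert j T)]
    apply Finset.sum_le_sum
    intro A hA
    rw [Finset.mem_powerset] at hA
    have hjA : j ∉ A := fun h => Finset.notMem_erase j Finset.univ (hA h)
    have hjAc : j ∈ Aᶜ := Finset.mem_compl.mpr hjA
    -- common base
    have hww : ∀ i ∈ A, w T i = w (insert j T) i := by
      intro i hiA
      have hij : i ≠ j := fun h => hjA (h ▸ hiA)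
      simp only [hw, Finset.mem_insert]
      rcases Classical.em (i ∈ T) with h | h <;> simp [h, hij]
    have hzz : ∀ k ∈ Aᶜ.erase j, z T k = z (insert j T) k := by
      intro k hk
      have hkj : k ≠ j := Finset.ne_of_mem_erase hk
      simp only [hz, Finset.mem_insert]
      rcases Classical.em (k ∈ T) with h | h <;> simp [h, hkj]
    set b : ℝ := a + ∑ i ∈ A, w T i + ∑ k ∈ Aᶜ.erase j, z T k with hb
    have hbnn : 0 ≤ b := by
      apply add_nonneg (add_nonneg ha _) _
      · exact Finset.sum_nonneg fun i _ => hwnn T i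
      · exact Finset.sum_nonneg fun k _ => hznn T k
    have hsplit : ∀ T' : Finset (Fin d), (∀ i ∈ A, w T i = w T' i) →
        (∀ k ∈ Aᶜ.erase j, z T k = z T' k) →
        (a + ∑ i ∈ A, w T' i + ∑ k ∈ Aᶜ, z T' k = b + z T' j) ∧
        (a + ∑ i ∈ insert j A, w T' i + ∑ k ∈ (insert j A)ᶜ, z T' k = b + w T' j) := by
      intro T' hwT hzT
      have hsA : ∑ i ∈ A, w T' i = ∑ i ∈ A, w T i := (Finset.sum_congr rfl hwT).symm
      have hsE : ∑ k ∈ Aᶜ.erase j, z T' k = ∑ k ∈ Aᶜ.erase j, z T k :=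
        (Finset.sum_congr rfl hzT).symm
      constructor
      · rw [← Finset.add_sum_erase Aᶜ (z T') hjAc, hsA, hsE, hb]; ring
      · rw [Finset.sum_insert hjA, Finset.compl_insert, hsA, hsE, hb]; ring
    obtain ⟨eT1, eT2⟩ := hsplit T (fun _ _ => rfl) (fun _ _ => rfl)
    obtain ⟨eT'1, eT'2⟩ := hsplit (insert j T) hww hzz
    rw [eT1, eT2, eT'1, eT'2]
    have hwTj : w T j = u j := by simp [hw, hj]
    have hzTj : z T j = v j := by simp [hz, hj]
    have hwT'j : w (insert j T) j = u' j := by simp [hw]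
    have hzT'j : z (insert j T) j = v' j := by simp [hz]
    rw [hwTj, hzTj, hwT'j, hzT'j]
    have := hpair j b hbnn
    linarith
  have main : ∀ T : Finset (Fin d), F ∅ ≤ F T := by
    intro T
    induction T using Finset.induction_on with
    | empty => exact le_refl _
    | insert _ _ hj ih => exact le_trans ih (step _ _ hj)
  have := main Finset.univ
  simpa [hF, hw, hz] using this

theorem stmt_11 (ψ : ℝ → ℝ) (h1 : NAlternating 1 ψ) (h2 : NAlternating 2 ψ)
    (d : ℕ) (hd : 1 ≤ d) (a : ℝ) (ha : 0 ≤ a)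
    (x R : Fin d → ℝ) (hx0 : ∀ i, 0 ≤ x i) (hxR : ∀ i, x i ≤ R i) :
    ∑ A : Finset (Fin d),
        ψ (a + (∑ i ∈ A, (x i - R i) ^ 2) + ∑ j ∈ Aᶜ, (x j + R j) ^ 2)
      ≤ ∑ A : Finset (Fin d),
          ψ (a + 3 * (∑ i ∈ A, R i ^ 2) + ∑ j ∈ Aᶜ, R j ^ 2) := by
  have key := key_lemma ψ (fun i => (x i - R i) ^ 2) (fun i => (x i + R i) ^ 2)
    (fun i => 3 * R i ^ 2) (fun i => R i ^ 2) a ha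
    (fun i => by positivity) (fun i => by positivity) (fun i => by positivity)
    (fun i => by positivity)
    (fun i b hb => pair_ineq ψ h1 h2 (x i) (R i) b (hx0 i) (hxR i) hb)
  calc ∑ A : Finset (Fin d),
        ψ (a + (∑ i ∈ A, (x i - R i) ^ 2) + ∑ j ∈ Aᶜ, (x j + R j) ^ 2)
      ≤ ∑ A : Finset (Fin d),
          ψ (a + (∑ i ∈ A, 3 * R i ^ 2) + ∑ j ∈ Aᶜ, R j ^ 2) := key
    _ = ∑ A : Finset (Fin d),
          ψ (a + 3 * (∑ i ∈ A, R i ^ 2) + ∑ j ∈ Aᶜ, R j ^ 2) := by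
        apply Finset.sum_congr rfl
        intro A _
        rw [Finset.mul_sum]
end

section
/- Let ψ : [0,∞) → ℝ be 2- and 3-alternating with ψ(0) = 0. Then for all a, b ≥ 0 one has ψ(3a + b) − (1/2) ψ(4a) ≤ ψ(a + b). -/
theorem stmt_12 (ψ : ℝ → ℝ) (h2 : NAlternating 2 ψ) (h3 : NAlternating 3 ψ)
    (hψ0 : ψ 0 = 0) (a b : ℝ) (ha : 0 ≤ a) (hb : 0 ≤ b) :
    ψ (3 * a + b) - (1 / 2) * ψ (4 * a) ≤ ψ (a + b) := by
  have H2 := h2 a ha ![2 * a, b] (by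
    intro i; fin_cases i <;> simp [ha, hb])
  have H3 := h3 0 le_rfl ![2 * a, a, a] (by
    intro i; fin_cases i <;> simp [ha])
  rw [show (Finset.univ : Finset (Finset (Fin 2))) = {∅, {0}, {1}, {0, 1}} from by decide,
    Finset.sum_insert (by decide), Finset.sum_insert (by decide),
    Finset.sum_insert (by decide), Finset.sum_singleton] at H2
  rw [show (Finset.univ : Finset (Finset (Fin 3))) =
      {∅, {0}, {1}, {2}, {0, 1}, {0, 2}, {1, 2}, {0, 1, 2}} from by decide,
    Finset.sum_insert (by decide), Finset.sum_insert (by decide),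
    Finset.sum_insert (by decide), Finset.sum_insert (by decide),
    Finset.sum_insert (by decide), Finset.sum_insert (by decide),
    Finset.sum_insert (by decide), Finset.sum_singleton] at H3
  simp (config := { decide := true }) only [Finset.sum_insert, Finset.sum_singleton, Finset.sum_empty, Finset.card_insert_of_notMem, Finset.card_singleton, Finset.card_empty, Finset.mem_insert, Finset.mem_singleton, Finset.notMem_empty, Matrix.cons_val_zero, Matrix.cons_val_one, Matrix.head_cons, Matrix.cons_val_two, Matrix.tail_cons, hψ0] at H2 H3
  norm_num at H2 H3
  rw [show a + (2 * a + b) = 3 * a + b by ring, show a + 2 * a = 3 * a by ring] at H2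
  rw [show (2:ℝ) * a + (a + a) = 4 * a by ring, show a + a = 2 * a by ring, show (2:ℝ) * a + a = 3 * a by ring, hψ0] at H3
  linarith
end

section
/- Let ψ : [0,∞) → ℝ and suppose that γ : ℝ^d → ℝ defined by γ(h) = ψ(‖h‖²) is convex. Let R₁,…,R_d > 0, K = ∏_{i=1}^d [−Rᵢ, Rᵢ], and let v_A (A ⊆ {1,…,d}) be the vertices of K, with v_∅ = (−R₁,…,−R_d). Then for every x ∈ K, Σ_{A ⊆ {1,…,d}} γ(x − v_A) ≤ Σ_{A ⊆ {1,…,d}} γ(v_∅ − v_A). -/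
open Finset

private lemma sum_subsets_prod {d : ℕ} (p q : Fin d → ℝ) :
    ∑ A : Finset (Fin d), ∏ i, (if i ∈ A then p i else q i) = ∏ i, (p i + q i) := by
  rw [Finset.prod_add, ← Finset.powerset_univ]
  refine Finset.sum_congr rfl fun A _ => ?_
  rw [Finset.prod_ite]
  congr 1
  · congr 1; simp [Finset.filter_mem_eq_inter]
  · congr 1; ext i; simp

private lemma convexOn_finsum {α E : Type*} [AddCommGroup E] [Module ℝ E]
    (t : Finset α) (f : α → E → ℝ) (hf : ∀ a ∈ t, ConvexOn ℝ Set.univ (f a)) :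
    ConvexOn ℝ Set.univ (fun x => ∑ a ∈ t, f a x) := by
  classical
  induction t using Finset.induction_on with
  | empty => simpa using convexOn_const (0 : ℝ) convex_univ
  | insert _ _ hx ih =>
    simp only [Finset.sum_insert hx]
    exact (hf _ (Finset.mem_insert_self _ _)).add
      (ih fun a ha => hf a (Finset.mem_insert_of_mem ha))

theorem stmt_15 (d : ℕ) (ψ : ℝ → ℝ) (γ : EuclideanSpace ℝ (Fin d) → ℝ)
    (hγψ : ∀ h, γ h = ψ (‖h‖ ^ 2)) (hγconv : ConvexOn ℝ Set.univ γ)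
    (R : Fin d → ℝ) (hR : ∀ i, 0 < R i)
    (v : Finset (Fin d) → EuclideanSpace ℝ (Fin d))
    (hv : ∀ (A : Finset (Fin d)) (i : Fin d), v A i = if i ∈ A then R i else -R i) :
    ∀ x : EuclideanSpace ℝ (Fin d), (∀ i, |x i| ≤ R i) →
      ∑ A : Finset (Fin d), γ (x - v A) ≤ ∑ A : Finset (Fin d), γ (v ∅ - v A) := by
  intro x hx
  classical
  -- the sum is symmetric: for any B, ∑_A γ (v B - v A) = ∑_A γ (v ∅ - v A)
  have hnorm : ∀ h : EuclideanSpace ℝ (Fin d), ‖h‖ ^ 2 = ∑ i, (h i) ^ 2 := by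
    intro h
    rw [EuclideanSpace.norm_eq, Real.sq_sqrt (by positivity)]
    simp [Real.norm_eq_abs, sq_abs]
  have hsymm : ∀ B : Finset (Fin d),
      ∑ A : Finset (Fin d), γ (v B - v A) = ∑ A : Finset (Fin d), γ (v ∅ - v A) := by
    intro B
    have hinv : Function.Involutive (fun A : Finset (Fin d) => symmDiff A B) :=
      fun A => symmDiff_symmDiff_cancel_right B A
    rw [← Function.Bijective.sum_comp hinv.bijective (fun A => γ (v ∅ - v A))]
    refine Finset.sum_congr rfl fun A _ => ?_
    rw [hγψ, hγψ, hnorm, hnorm]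
    congr 1
    refine Finset.sum_congr rfl fun i _ => ?_
    have h1 : (v B - v A) i = v B i - v A i := rfl
    have h2 : (v ∅ - v (symmDiff A B)) i = v ∅ i - v (symmDiff A B) i := rfl
    rw [h1, h2, hv, hv, hv, hv]
    by_cases hiA : i ∈ A <;> by_cases hiB : i ∈ B <;>
      simp [Finset.mem_symmDiff, hiA, hiB] <;> ring
  -- the weights of x as a convex combination of the vertices
  set lam : Finset (Fin d) → ℝ :=
    fun A => ∏ i, (if i ∈ A then (R i + x i) / (2 * R i) else (R i - x i) / (2 * R i)) with hlam
  have hlam_nonneg : ∀ A : Finset (Fin d), 0 ≤ lam A := by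
    intro A
    refine Finset.prod_nonneg fun i _ => ?_
    obtain ⟨h1, h1'⟩ := abs_le.mp (hx i)
    have h2 := hR i
    split <;> exact div_nonneg (by linarith) (by linarith)
  have hlam_sum : ∑ A : Finset (Fin d), lam A = 1 := by
    rw [hlam]
    rw [sum_subsets_prod]
    rw [Finset.prod_eq_one]
    intro i _
    have h2 := (hR i).ne'
    field_simp
    ring
  have hxcomb : x = ∑ A : Finset (Fin d), lam A • v A := by
    refine PiLp.ext fun j => ?_
    have happ : (∑ A : Finset (Fin d), lam A • v A) j
        = ∑ A : Finset (Fin d), lam A * v A j := by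
      rw [WithLp.ofLp_sum, Finset.sum_apply]; rfl
    rw [happ]
    have key : ∑ A : Finset (Fin d), lam A * v A j
        = ∑ A : Finset (Fin d), ∏ i,
            (if i ∈ A then (R i + x i) / (2 * R i) * (if i = j then R i else 1)
             else (R i - x i) / (2 * R i) * (if i = j then -R i else 1)) := by
      refine Finset.sum_congr rfl fun A _ => ?_
      rw [hv, hlam]
      have : (∏ i, (if i ∈ A then (R i + x i) / (2 * R i) else (R i - x i) / (2 * R i)))
            * (if j ∈ A then R j else -R j)
          = ∏ i, ((if i ∈ A then (R i + x i) / (2 * R i) else (R i - x i) / (2 * R i))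
              * (if i = j then (if j ∈ A then R j else -R j) else 1)) := by
        rw [Finset.prod_mul_distrib]
        congr 1
        rw [Finset.prod_ite_eq' Finset.univ j
          (fun _ => (if j ∈ A then R j else -R j))]
        simp
      rw [this]
      refine Finset.prod_congr rfl fun i _ => ?_
      by_cases hij : i = j
      · subst hij; by_cases hiA : i ∈ A <;> simp [hiA]
      · simp [hij]
    rw [key]
    have := sum_subsets_prod
      (fun i => (R i + x i) / (2 * R i) * (if i = j then R i else 1))
      (fun i => (R i - x i) / (2 * R i) * (if i = j then -R i else 1))
    rw [this]
    have : ∀ i, ((R i + x i) / (2 * R i) * (if i = j then R i else 1)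
        + (R i - x i) / (2 * R i) * (if i = j then -R i else 1))
        = if i = j then x i else 1 := by
      intro i
      have h2 := (hR i).ne'
      by_cases hij : i = j
      · subst hij; simp only [if_pos rfl, ↓reduceIte]; field_simp; ring
      · simp only [if_neg hij, mul_one]; field_simp; ring
    simp_rw [this]
    rw [Finset.prod_ite_eq' Finset.univ j (fun i => x i)]
    simp
  -- convexity of the averaged function
  have hF : ConvexOn ℝ Set.univ (fun y => ∑ A : Finset (Fin d), γ (y - v A)) := by
    refine convexOn_finsum _ _ fun A _ => ?_
    have := hγconv.translate_right (-(v A))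
    simp only [Set.preimage_univ] at this
    convert this using 2 with y
    · simp [sub_eq_add_neg, add_comm]
  -- Jensen
  calc ∑ A : Finset (Fin d), γ (x - v A)
      ≤ ∑ B : Finset (Fin d), lam B * ∑ A : Finset (Fin d), γ (v B - v A) := by
        have := hF.map_sum_le (t := Finset.univ) (w := lam) (p := v)
          (fun A _ => hlam_nonneg A) hlam_sum (fun A _ => Set.mem_univ _)
        rw [← hxcomb] at this
        exact this
    _ = ∑ B : Finset (Fin d), lam B * ∑ A : Finset (Fin d), γ (v ∅ - v A) := by
        refine Finset.sum_congr rfl fun B _ => ?_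
        rw [hsymm B]
    _ = ∑ A : Finset (Fin d), γ (v ∅ - v A) := by
        rw [← Finset.sum_mul, hlam_sum, one_mul]
end
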